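/- arXiv:1606.07489 — 2 statements merged into one kernel-verified Lean document; each statement's English description precedes it below -/
import Mathlib

section
/- Two countable structures A and B are infinitarily bi-interpretable if and only if there is a Baire-measurable group isomorphism between Aut(A) and Aut(B). Furthermore, every continuous isomorphism from Aut(B) onto Aut(A) is of the form G_I for some interpretation I of A in B which is part of an infinitary bi-interpretation of A and B. -/
namespace Paper

/-- A structure in a (countable) relational language with arity function `L`,
with domain `ω`.  `rel i` is the interpretation of the `i`-th relation symbol,
of arity `L i`. -/
structure Str (L : ℕ → ℕ) where
  rel : ∀ i, (Fin (L i) → ℕ) → Bool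

/-- `g` is an isomorphism from `M` to `N`. -/
def IsIso {L : ℕ → ℕ} (M N : Str L) (g : ℕ ≃ ℕ) : Prop :=
  ∀ i (v : Fin (L i) → ℕ), M.rel i v = N.rel i fun k => g (v k)

theorem isIso_refl {L : ℕ → ℕ} (M : Str L) : IsIso M M (Equiv.refl ℕ) := fun _ _ => rfl

/-- The automorphism group of `M`, as a subgroup of `S_∞ = Equiv.Perm ℕ`. -/
def aut {L : ℕ → ℕ} (M : Str L) : Subgroup (Equiv.Perm ℕ) where
  carrier := {g | IsIso M M g}
  one_mem' := isIso_refl M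
  mul_mem' := by
    intro a b ha hb i v
    exact (hb i v).trans (ha i fun k => b (v k))
  inv_mem' := by
    intro a ha i v
    have h := ha i fun k => a⁻¹ (v k)
    simpa using h.symm

theorem mem_aut {L : ℕ → ℕ} {M : Str L} {g : Equiv.Perm ℕ} (h : g ∈ aut M) : IsIso M M g := h

/-- The topology of pointwise convergence on `S_∞ = Equiv.Perm ℕ`, i.e. the topology
induced from Baire space `ω^ω`; automorphism groups of countable structures carry the
subspace topology. -/
instance : TopologicalSpace (Equiv.Perm ℕ) :=
  TopologicalSpace.induced (fun g => (g : ℕ → ℕ)) inferInstance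

end Paper
namespace Paper

/-- An infinitary interpretation of `A` in `B` (Definition 1.1 of the paper).
The domain `Dom ⊆ B^{<ω}`, the equivalence relation `eqv` and the relations `R i`
are required to be `L_{ω₁ω}`-definable without parameters in `B`; for countable
structures this is equivalent to invariance under all automorphisms of `B`
(acting coordinatewise on tuples), which is how definability is rendered here.
`F` is the map `f^B_A : Dom → A` inducing an isomorphism
`(Dom/∼; R₀/∼, R₁/∼, …) ≅ (A; P₀^A, P₁^A, …)`. -/
structure Interp {LA LB : ℕ → ℕ} (A : Str LA) (B : Str LB) where
  Dom : Set (List ℕ)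
  eqv : List ℕ → List ℕ → Prop
  R : ∀ i, (Fin (LA i) → List ℕ) → Prop
  F : List ℕ → ℕ
  dom_inv : ∀ g ∈ aut B, ∀ l ∈ Dom, List.map (⇑g) l ∈ Dom
  eqv_inv : ∀ g ∈ aut B, ∀ l₁ ∈ Dom, ∀ l₂ ∈ Dom,
    eqv l₁ l₂ → eqv (List.map (⇑g) l₁) (List.map (⇑g) l₂)
  R_inv : ∀ i, ∀ g ∈ aut B, ∀ v : Fin (LA i) → List ℕ,
    (∀ k, v k ∈ Dom) → R i v → R i fun k => List.map (⇑g) (v k)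
  eqv_refl : ∀ l ∈ Dom, eqv l l
  eqv_symm : ∀ l₁ ∈ Dom, ∀ l₂ ∈ Dom, eqv l₁ l₂ → eqv l₂ l₁
  eqv_trans : ∀ l₁ ∈ Dom, ∀ l₂ ∈ Dom, ∀ l₃ ∈ Dom, eqv l₁ l₂ → eqv l₂ l₃ → eqv l₁ l₃
  R_resp : ∀ i, ∀ v w : Fin (LA i) → List ℕ, (∀ k, v k ∈ Dom) → (∀ k, w k ∈ Dom) →
    (∀ k, eqv (v k) (w k)) → R i v → R i w
  F_surj : ∀ a : ℕ, ∃ l ∈ Dom, F l = a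
  F_eqv : ∀ l₁ ∈ Dom, ∀ l₂ ∈ Dom, (F l₁ = F l₂ ↔ eqv l₁ l₂)
  F_rel : ∀ i, ∀ v : Fin (LA i) → List ℕ, (∀ k, v k ∈ Dom) →
    (R i v ↔ A.rel i (fun k => F (v k)) = true)

end Paper
namespace Paper

/-- An infinitary bi-interpretation of `A` and `B` (Definition 1.6 of the paper):
interpretations of each structure in the other such that the composite maps
`f^A_B ∘ f̃^B_A : Dom_B^{(Dom_A^B)} → B` and `f^B_A ∘ f̃^A_B : Dom_A^{(Dom_B^A)} → A`
are `L_{ω₁ω}`-definable in `B` and in `A` respectively; definability is rendered as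
invariance of the graph under all automorphisms. -/
structure BiInterp {LA LB : ℕ → ℕ} (A : Str LA) (B : Str LB) where
  I : Interp A B
  J : Interp B A
  comp_def_B : ∀ g ∈ aut B, ∀ LL : List (List ℕ), (∀ l ∈ LL, l ∈ I.Dom) →
    List.map I.F LL ∈ J.Dom →
    J.F (List.map I.F (List.map (List.map (⇑g)) LL)) = g (J.F (List.map I.F LL))
  comp_def_A : ∀ g ∈ aut A, ∀ LL : List (List ℕ), (∀ l ∈ LL, l ∈ J.Dom) →
    List.map J.F LL ∈ I.Dom →
    I.F (List.map J.F (List.map (List.map (⇑g)) LL)) = g (I.F (List.map J.F LL))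

end Paper
namespace Paper

/-- A map between topological spaces is Baire-measurable if preimages of open sets
have the Baire property. -/
def BaireMeasurableFun {α β : Type*} [TopologicalSpace α] [TopologicalSpace β]
    (f : α → β) : Prop :=
  ∀ s : Set β, IsOpen s → BaireMeasurableSet (f ⁻¹' s)

end Paper
namespace Paper

section Infra1

open Topology Filter Set

lemma continuous_permCoe : Continuous (fun g : Equiv.Perm ℕ => (g : ℕ → ℕ)) :=
  continuous_induced_dom

lemma inducing_permCoe : IsInducing (fun g : Equiv.Perm ℕ => (g : ℕ → ℕ)) := ⟨rfl⟩

lemma continuous_eval2 (m : ℕ) :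
    Continuous fun p : (ℕ → ℕ) × (ℕ → ℕ) => p.1 (p.2 m) := by
  rw [continuous_discrete_rng]
  intro c
  have h : (fun p : (ℕ → ℕ) × (ℕ → ℕ) => p.1 (p.2 m)) ⁻¹' {c} =
      ⋃ k, ((fun p : (ℕ → ℕ) × (ℕ → ℕ) => p.2 m) ⁻¹' {k}) ∩
        ((fun p : (ℕ → ℕ) × (ℕ → ℕ) => p.1 k) ⁻¹' {c}) := by
    ext p
    simp only [Set.mem_preimage, Set.mem_singleton_iff, Set.mem_iUnion, Set.mem_inter_iff]
    constructor
    · intro h; exact ⟨p.2 m, rfl, h⟩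
    · rintro ⟨k, hk, hc⟩; rw [← hk] at hc; exact hc
  rw [h]
  refine isOpen_iUnion fun k => IsOpen.inter ?_ ?_
  · exact (isOpen_discrete _).preimage ((continuous_apply m).comp continuous_snd)
  · exact (isOpen_discrete _).preimage ((continuous_apply k).comp continuous_fst)

lemma isOpen_perm_fix (x y : ℕ) : IsOpen {g : Equiv.Perm ℕ | g x = y} :=
  (isOpen_discrete {y}).preimage ((continuous_apply x).comp continuous_permCoe)

instance : IsTopologicalGroup (Equiv.Perm ℕ) where
  continuous_mul := by
    apply continuous_induced_rng.mpr
    apply continuous_pi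
    intro x
    exact (continuous_eval2 x).comp
      ((continuous_permCoe.comp continuous_fst).prodMk (continuous_permCoe.comp continuous_snd))
  continuous_inv := by
    apply continuous_induced_rng.mpr
    apply continuous_pi
    intro x
    show Continuous fun g : Equiv.Perm ℕ => ((g⁻¹ : Equiv.Perm ℕ) : ℕ → ℕ) x
    rw [continuous_discrete_rng]
    intro c
    have h : (fun g : Equiv.Perm ℕ => ((g⁻¹ : Equiv.Perm ℕ) : ℕ → ℕ) x) ⁻¹' {c} =
        {g : Equiv.Perm ℕ | g c = x} := by
      ext g
      simp only [Set.mem_preimage, Set.mem_singleton_iff, Set.mem_setOf_eq]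
      constructor
      · intro h; rw [← h]; exact g.apply_symm_apply x
      · intro h; rw [← h]; exact g.symm_apply_apply c
    rw [h]
    exact isOpen_perm_fix c x

lemma isEmbedding_permCoe : IsEmbedding (fun g : Equiv.Perm ℕ => (g : ℕ → ℕ)) :=
  ⟨inducing_permCoe, fun g h hgh => Equiv.coe_fn_injective hgh⟩

instance : T2Space (Equiv.Perm ℕ) := isEmbedding_permCoe.t2Space

end Infra1
section Infra2

open Topology Filter Set

variable {L : ℕ → ℕ}

lemma continuous_autCoe (M : Str L) :
    Continuous (fun g : ↥(aut M) => ((g : Equiv.Perm ℕ) : ℕ → ℕ)) :=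
  continuous_permCoe.comp continuous_subtype_val

lemma inducing_autCoe (M : Str L) :
    IsInducing (fun g : ↥(aut M) => ((g : Equiv.Perm ℕ) : ℕ → ℕ)) :=
  inducing_permCoe.comp IsInducing.subtypeVal

lemma isOpen_aut_fix (M : Str L) (x y : ℕ) :
    IsOpen {h : ↥(aut M) | ((h : Equiv.Perm ℕ)) x = y} :=
  (isOpen_perm_fix x y).preimage continuous_subtype_val

/-- The map `g ↦ (g, g⁻¹)` realizing `Aut(M)` as a closed subset of `ω^ω × ω^ω`. -/
def pairMap (M : Str L) : ↥(aut M) → (ℕ → ℕ) × (ℕ → ℕ) :=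
  fun g => (((g : Equiv.Perm ℕ) : ℕ → ℕ), (((g : Equiv.Perm ℕ)⁻¹ : Equiv.Perm ℕ) : ℕ → ℕ))

lemma continuous_pairMap (M : Str L) : Continuous (pairMap M) := by
  refine Continuous.prodMk (continuous_autCoe M) ?_
  exact continuous_permCoe.comp (continuous_inv.comp continuous_subtype_val)

lemma inducing_pairMap (M : Str L) : IsInducing (pairMap M) :=
  (inducing_autCoe M).of_comp (continuous_pairMap M) continuous_fst

lemma injective_pairMap (M : Str L) : Function.Injective (pairMap M) := by
  intro g h hgh
  have := congrArg Prod.fst hgh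
  exact Subtype.ext (Equiv.coe_fn_injective this)

lemma continuous_relEval (M : Str L) (i : ℕ) (v : Fin (L i) → ℕ) :
    Continuous fun f : ℕ → ℕ => M.rel i (fun k => f (v k)) := by
  rw [continuous_discrete_rng]
  intro b
  have h : (fun f : ℕ → ℕ => M.rel i fun k => f (v k)) ⁻¹' {b} =
      ⋃ (w : Fin (L i) → ℕ) (_ : M.rel i w = b), ⋂ k, {f : ℕ → ℕ | f (v k) = w k} := by
    ext f
    simp only [mem_preimage, mem_singleton_iff, mem_iUnion, mem_iInter, mem_setOf_eq]
    constructor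
    · intro h; exact ⟨fun k => f (v k), h, fun k => rfl⟩
    · rintro ⟨w, hw, hfw⟩
      have : (fun k => f (v k)) = w := funext hfw
      rw [this]; exact hw
  rw [h]
  refine isOpen_iUnion fun w => isOpen_iUnion fun _ => isOpen_iInter_of_finite fun k => ?_
  have : {f : ℕ → ℕ | f (v k) = w k} = (fun f : ℕ → ℕ => f (v k)) ⁻¹' {w k} := rfl
  rw [this]
  exact (isOpen_discrete _).preimage (continuous_apply (A := fun _ : ℕ => ℕ) (v k))

lemma isClosed_range_pairMap (M : Str L) : IsClosed (Set.range (pairMap M)) := by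
  have hr : Set.range (pairMap M) =
      {p : (ℕ → ℕ) × (ℕ → ℕ) | (∀ m, p.1 (p.2 m) = m) ∧ (∀ m, p.2 (p.1 m) = m) ∧
        ∀ i (v : Fin (L i) → ℕ), M.rel i v = M.rel i (fun k => p.1 (v k))} := by
    ext p
    constructor
    · rintro ⟨g, rfl⟩
      refine ⟨fun m => (g : Equiv.Perm ℕ).apply_symm_apply m,
        fun m => (g : Equiv.Perm ℕ).symm_apply_apply m, fun i v => mem_aut g.2 i v⟩
    · rintro ⟨h1, h2, h3⟩
      have hmem : (⟨p.1, p.2, fun m => h2 m, fun m => h1 m⟩ : Equiv.Perm ℕ) ∈ aut M := by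
        intro i v
        exact h3 i v
      exact ⟨⟨⟨p.1, p.2, fun m => h2 m, fun m => h1 m⟩, hmem⟩, rfl⟩
  rw [hr]
  have c1 : IsClosed {p : (ℕ → ℕ) × (ℕ → ℕ) | ∀ m, p.1 (p.2 m) = m} := by
    have : {p : (ℕ → ℕ) × (ℕ → ℕ) | ∀ m, p.1 (p.2 m) = m} =
        ⋂ m, (fun p : (ℕ → ℕ) × (ℕ → ℕ) => p.1 (p.2 m)) ⁻¹' {m} := by
      ext p; simp [Set.mem_iInter]
    rw [this]
    exact isClosed_iInter fun m => (isClosed_discrete _).preimage (continuous_eval2 m)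
  have c2 : IsClosed {p : (ℕ → ℕ) × (ℕ → ℕ) | ∀ m, p.2 (p.1 m) = m} := by
    have : {p : (ℕ → ℕ) × (ℕ → ℕ) | ∀ m, p.2 (p.1 m) = m} =
        ⋂ m, (fun p : (ℕ → ℕ) × (ℕ → ℕ) => p.2 (p.1 m)) ⁻¹' {m} := by
      ext p; simp [Set.mem_iInter]
    rw [this]
    refine isClosed_iInter fun m => (isClosed_discrete _).preimage ?_
    have : (fun p : (ℕ → ℕ) × (ℕ → ℕ) => p.2 (p.1 m)) =
        (fun q : (ℕ → ℕ) × (ℕ → ℕ) => q.1 (q.2 m)) ∘ Prod.swap := rfl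
    rw [this]
    exact (continuous_eval2 m).comp continuous_swap
  have c3 : IsClosed {p : (ℕ → ℕ) × (ℕ → ℕ) |
      ∀ i (v : Fin (L i) → ℕ), M.rel i v = M.rel i (fun k => p.1 (v k))} := by
    have : {p : (ℕ → ℕ) × (ℕ → ℕ) |
        ∀ i (v : Fin (L i) → ℕ), M.rel i v = M.rel i (fun k => p.1 (v k))} =
        ⋂ (i) (v : Fin (L i) → ℕ),
          (fun p : (ℕ → ℕ) × (ℕ → ℕ) => M.rel i (fun k => p.1 (v k))) ⁻¹' {M.rel i v} := by
      ext p
      simp only [Set.mem_iInter, mem_setOf_eq, Set.mem_preimage, Set.mem_singleton_iff]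
      exact ⟨fun h i v => (h i v).symm, fun h i v => (h i v).symm⟩
    rw [this]
    refine isClosed_iInter fun i => isClosed_iInter fun v =>
      (isClosed_discrete _).preimage ?_
    exact (continuous_relEval M i v).comp continuous_fst
  exact c1.inter (c2.inter c3)

instance polish_aut (M : Str L) : PolishSpace ↥(aut M) := by
  have hce : Topology.IsClosedEmbedding (pairMap M) :=
    ⟨⟨inducing_pairMap M, injective_pairMap M⟩, isClosed_range_pairMap M⟩
  haveI : PolishSpace ((ℕ → ℕ) × (ℕ → ℕ)) := inferInstance
  exact hce.polishSpace

instance baire_aut (M : Str L) : BaireSpace ↥(aut M) := by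
  letI := TopologicalSpace.upgradeIsCompletelyMetrizable ↥(aut M)
  infer_instance

instance nonempty_aut (M : Str L) : Nonempty ↥(aut M) := ⟨1⟩

end Infra2
section Infra3

open Topology Filter Set

variable {L : ℕ → ℕ} {M : Str L}

/-- Basic neighborhoods of the identity in `Aut(M)`: pointwise stabilizers of initial segments. -/
lemma exists_stab_basic {S : Set ↥(aut M)} (hS : S ∈ 𝓝 (1 : ↥(aut M))) :
    ∃ n, ∀ h : ↥(aut M), (∀ x < n, (h : Equiv.Perm ℕ) x = x) → h ∈ S := by
  have hind := inducing_autCoe M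
  rw [hind.nhds_eq_comap] at hS
  obtain ⟨t, ht, hts⟩ := hS
  have hid : ((1 : ↥(aut M)) : Equiv.Perm ℕ) = (1 : Equiv.Perm ℕ) := rfl
  rw [nhds_pi] at ht
  obtain ⟨I, hIfin, V, hV, hIVt⟩ := Filter.mem_pi.mp ht
  obtain ⟨n, hn⟩ : ∃ n, ∀ x ∈ I, x < n := by
    obtain ⟨m, hm⟩ := hIfin.bddAbove
    exact ⟨m + 1, fun x hx => Nat.lt_succ_of_le (hm hx)⟩
  refine ⟨n, fun h hfix => ?_⟩
  apply hts
  apply hIVt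
  intro x hx
  have hVx : V x ∈ 𝓝 ((((1 : ↥(aut M)) : Equiv.Perm ℕ) : ℕ → ℕ) x) := hV x
  have h1x : (((1 : ↥(aut M)) : Equiv.Perm ℕ) : ℕ → ℕ) x = x := rfl
  rw [h1x, nhds_discrete, Filter.mem_pure] at hVx
  show (((h : Equiv.Perm ℕ)) : ℕ → ℕ) x ∈ V x
  rw [hfix x (hn x hx)]
  exact hVx

lemma symmdiff_meagre {α : Type*} [TopologicalSpace α] {S U : Set α}
    (h : S =ᵇ U) : IsMeagre (U \ S) := by
  rw [IsMeagre]
  refine Filter.mem_of_superset h ?_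
  intro x hx
  simp only [Set.mem_compl_iff, Set.mem_diff] at *
  intro ⟨hxU, hxS⟩
  have : (x ∈ S) = (x ∈ U) := hx
  rw [this] at hxS
  exact hxS hxU

lemma open_nonempty_not_meagre {α : Type*} [TopologicalSpace α] [BaireSpace α] {U : Set α}
    (hU : IsOpen U) (hne : U.Nonempty) : ¬ IsMeagre U := by
  intro hmeag
  rw [IsMeagre] at hmeag
  have hd : Dense Uᶜ := dense_of_mem_residual hmeag
  obtain ⟨x, hx1, hx2⟩ := hd.inter_open_nonempty U hU hne
  exact hx2 hx1

lemma isMeagre_preimage_mul {G : Type*} [Group G] [TopologicalSpace G] [IsTopologicalGroup G]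
    (g : G) {S : Set G} (hS : IsMeagre S) : IsMeagre ((fun y => g * y) ⁻¹' S) :=
  hS.preimage_of_isOpenMap (Homeomorph.mulLeft g).continuous (Homeomorph.mulLeft g).isOpenMap

/-- Pettis' lemma: a non-meager Baire-measurable set `S` in a topological group satisfies
that `S · S⁻¹` is a neighborhood of the identity. -/
lemma pettis {G : Type*} [Group G] [TopologicalSpace G] [IsTopologicalGroup G] [BaireSpace G]
    {S : Set G} (hBM : BaireMeasurableSet S) (hnm : ¬ IsMeagre S) :
    ∃ W ∈ 𝓝 (1 : G), ∀ g ∈ W, ∃ x, x ∈ S ∧ g * x ∈ S := by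
  obtain ⟨U, Uo, hSU⟩ := hBM.residualEq_isOpen
  have hUS : IsMeagre (U \ S) := symmdiff_meagre hSU
  have hSUm : IsMeagre (S \ U) := by
    have := symmdiff_meagre (hSU.symm)
    exact this
  have hUne : U.Nonempty := by
    rcases U.eq_empty_or_nonempty with h | h
    · exfalso
      apply hnm
      have : S ⊆ (S \ U) := by rw [h]; simp
      exact hSUm.mono this
    · exact h
  obtain ⟨u₀, hu₀⟩ := hUne
  refine ⟨(fun g => g * u₀) ⁻¹' U, ?_, ?_⟩
  · have hco : Continuous fun g : G => g * u₀ := continuous_id.mul continuous_const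
    have : IsOpen ((fun g => g * u₀) ⁻¹' U) := Uo.preimage hco
    refine this.mem_nhds ?_
    show (1 : G) * u₀ ∈ U
    rwa [one_mul]
  · intro g hg
    set T := U ∩ ((fun y => g * y) '' U) with hT
    have hT' : T = U ∩ ((fun y => g⁻¹ * y) ⁻¹' U) := by
      rw [hT]
      congr 1
      ext y
      constructor
      · rintro ⟨z, hz, rfl⟩
        simpa [← mul_assoc]
      · intro hy
        exact ⟨g⁻¹ * y, hy, by simp [← mul_assoc]⟩
    have hTopen : IsOpen T := by
      rw [hT']
      exact Uo.inter (Uo.preimage ((continuous_const.mul continuous_id)))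
    have hTne : T.Nonempty := by
      refine ⟨g * u₀, hg, ⟨u₀, hu₀, rfl⟩⟩
    set E := (U \ S) ∪ ((fun y => g⁻¹ * y) ⁻¹' (U \ S)) with hE
    have hEme : IsMeagre E := by
      rw [hE, IsMeagre, Set.compl_union]
      exact Filter.inter_mem hUS (isMeagre_preimage_mul g⁻¹ hUS)
    have : ¬ T ⊆ E := by
      intro hsub
      exact open_nonempty_not_meagre hTopen hTne (hEme.mono hsub)
    obtain ⟨y, hyT, hyE⟩ := Set.not_subset.mp this
    rw [hT'] at hyT
    rw [hE] at hyE
    simp only [Set.mem_union, Set.mem_preimage, Set.mem_diff, not_or, not_and, not_not] at hyE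
    refine ⟨g⁻¹ * y, hyE.2 hyT.2, ?_⟩
    have : g * (g⁻¹ * y) = y := by simp [← mul_assoc]
    rw [this]
    exact hyE.1 hyT.1

/-- The key consequence of Pettis' theorem: if all "stabilizer preimages" under a homomorphism
`K` are Baire measurable, then `K` satisfies the stabilizer condition making it continuous. -/
theorem stab_of_BM {L₁ L₂ : ℕ → ℕ} {M : Str L₁} {N : Str L₂} (K : ↥(aut M) →* ↥(aut N))
    (hBM : ∀ b : ℕ, BaireMeasurableSet {h : ↥(aut M) | ((K h : Equiv.Perm ℕ)) b = b}) (b : ℕ) :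
    ∃ n, ∀ h : ↥(aut M), (∀ x < n, (h : Equiv.Perm ℕ) x = x) →
      ((K h : Equiv.Perm ℕ)) b = b := by
  set S := {h : ↥(aut M) | ((K h : Equiv.Perm ℕ)) b = b} with hSdef
  have hnm : ¬ IsMeagre S := by
    intro hmeag
    have hcover : (Set.univ : Set ↥(aut M)) =
        ⋃ c : ℕ, {h : ↥(aut M) | ((K h : Equiv.Perm ℕ)) b = c} := by
      ext h; simp
    have hmeagc : ∀ c : ℕ, IsMeagre {h : ↥(aut M) | ((K h : Equiv.Perm ℕ)) b = c} := by
      intro c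
      rcases Set.eq_empty_or_nonempty {h : ↥(aut M) | ((K h : Equiv.Perm ℕ)) b = c} with h | h
      · rw [h]; exact IsMeagre.empty
      · obtain ⟨h₀, hh₀⟩ := h
        have hh₀' : ((K h₀ : Equiv.Perm ℕ)) b = c := hh₀
        have : {h : ↥(aut M) | ((K h : Equiv.Perm ℕ)) b = c} = (fun h => h₀⁻¹ * h) ⁻¹' S := by
          ext h
          simp only [Set.mem_setOf_eq, Set.mem_preimage, hSdef]
          have key : ((K (h₀⁻¹ * h) : Equiv.Perm ℕ)) b
              = ((K h₀ : Equiv.Perm ℕ))⁻¹ (((K h : Equiv.Perm ℕ)) b) := by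
            rw [map_mul, map_inv]
            rfl
          constructor
          · intro hc
            rw [key, hc, ← hh₀']
            exact (K h₀ : Equiv.Perm ℕ).symm_apply_apply b
          · intro hb
            rw [key] at hb
            have h2 := congrArg (K h₀ : Equiv.Perm ℕ) hb
            rw [show ∀ y, (K h₀ : Equiv.Perm ℕ) ((K h₀ : Equiv.Perm ℕ)⁻¹ y) = y from
              fun y => (K h₀ : Equiv.Perm ℕ).apply_symm_apply y] at h2
            rw [h2, hh₀']
        rw [this]
        exact isMeagre_preimage_mul h₀⁻¹ hmeag
    have huniv : IsMeagre (Set.univ : Set ↥(aut M)) := by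
      rw [hcover]
      exact isMeagre_iUnion hmeagc
    exact open_nonempty_not_meagre isOpen_univ ⟨1, trivial⟩ huniv
  obtain ⟨W, hW, hWS⟩ := pettis (hBM b) hnm
  obtain ⟨n, hn⟩ := exists_stab_basic hW
  refine ⟨n, fun h hfix => ?_⟩
  obtain ⟨x, hxS, hgxS⟩ := hWS h (hn h hfix)
  have h1 : ((K (h * x) : Equiv.Perm ℕ)) b = b := hgxS
  have h2 : ((K x : Equiv.Perm ℕ)) b = b := hxS
  have h3 : ((K (h * x) : Equiv.Perm ℕ)) b = ((K h : Equiv.Perm ℕ)) (((K x : Equiv.Perm ℕ)) b) := by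
    rw [map_mul]; rfl
  rw [h3, h2] at h1
  exact h1

end Infra3
section Infra4

open Topology Filter Set

/-- The stabilizer condition on a homomorphism between automorphism groups:
every point stabilizer pulls back to a basic open subgroup.  This is exactly
continuity at the identity. -/
def StabCond {L₁ L₂ : ℕ → ℕ} {M : Str L₁} {N : Str L₂} (K : ↥(aut M) →* ↥(aut N)) : Prop :=
  ∀ b : ℕ, ∃ n, ∀ h : ↥(aut M), (∀ x < n, (h : Equiv.Perm ℕ) x = x) →
    ((K h : Equiv.Perm ℕ)) b = b

variable {LA LB : ℕ → ℕ} {A : Str LA} {B : Str LB}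

/-- Lengths of the defining tuples, chosen to make lengths injective. -/
noncomputable def NN (K : ↥(aut B) →* ↥(aut A)) (hK : StabCond K) (a : ℕ) : ℕ :=
  a + (Finset.range (a + 1)).sup fun j => (hK j).choose

lemma NN_strictMono (K : ↥(aut B) →* ↥(aut A)) (hK : StabCond K) : StrictMono (NN K hK) := by
  apply strictMono_nat_of_lt_succ
  intro a
  have hsup : ((Finset.range (a + 1)).sup fun j => (hK j).choose) ≤
      ((Finset.range (a + 2)).sup fun j => (hK j).choose) :=
    Finset.sup_mono (Finset.range_subset_range.mpr (by omega))
  have : a + 1 ≤ a + 1 + ((Finset.range (a + 2)).sup fun j => (hK j).choose) := by omega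
  calc NN K hK a = a + ((Finset.range (a + 1)).sup fun j => (hK j).choose) := rfl
    _ < a + 1 + ((Finset.range (a + 2)).sup fun j => (hK j).choose) := by omega
    _ = NN K hK (a + 1) := rfl

lemma NN_spec (K : ↥(aut B) →* ↥(aut A)) (hK : StabCond K) (a : ℕ) (h : ↥(aut B))
    (hfix : ∀ x < NN K hK a, (h : Equiv.Perm ℕ) x = x) : ((K h : Equiv.Perm ℕ)) a = a := by
  apply (hK a).choose_spec h
  intro x hx
  have h1 : (hK a).choose ≤ (Finset.range (a + 1)).sup fun j => (hK j).choose := by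
    apply Finset.le_sup (f := fun j => (hK j).choose)
    exact Finset.mem_range.mpr (Nat.lt_succ_self a)
  have h2 : (hK a).choose ≤ NN K hK a := le_trans h1 (Nat.le_add_left _ _)
  exact hfix x (lt_of_lt_of_le hx h2)

/-- The defining tuples of the interpretation. -/
noncomputable def tau (K : ↥(aut B) →* ↥(aut A)) (hK : StabCond K) (a : ℕ) : List ℕ :=
  List.range (NN K hK a)

/-- The domain of the interpretation: orbits of the defining tuples. -/
def IDomP (K : ↥(aut B) →* ↥(aut A)) (hK : StabCond K) (l : List ℕ) : Prop :=
  ∃ (a : ℕ) (g : ↥(aut B)), l = List.map (⇑(g : Equiv.Perm ℕ)) (tau K hK a)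

open scoped Classical in
/-- The interpretation map `F`. -/
noncomputable def IF (K : ↥(aut B) →* ↥(aut A)) (hK : StabCond K) (l : List ℕ) : ℕ :=
  if h : IDomP K hK l then ((K h.choose_spec.choose : Equiv.Perm ℕ)) h.choose else 0

lemma IF_spec (K : ↥(aut B) →* ↥(aut A)) (hK : StabCond K) {a : ℕ} {g : ↥(aut B)} {l : List ℕ}
    (hl : l = List.map (⇑(g : Equiv.Perm ℕ)) (tau K hK a)) :
    IF K hK l = ((K g : Equiv.Perm ℕ)) a := by
  have hP : IDomP K hK l := ⟨a, g, hl⟩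
  unfold IF
  rw [dif_pos hP]
  set a' := hP.choose with ha'
  set g' := hP.choose_spec.choose with hg'
  have hl' : l = List.map (⇑(g' : Equiv.Perm ℕ)) (tau K hK a') := hP.choose_spec.choose_spec
  have hlen : NN K hK a' = NN K hK a := by
    have h1 := congrArg List.length (hl'.symm.trans hl)
    simpa [tau] using h1
  have haa : a' = a := (NN_strictMono K hK).injective hlen
  subst haa
  have hmaps : List.map (⇑(g' : Equiv.Perm ℕ)) (tau K hK a') =
      List.map (⇑(g : Equiv.Perm ℕ)) (tau K hK a') := hl'.symm.trans hl
  have hpt : ∀ x < NN K hK a', (g' : Equiv.Perm ℕ) x = (g : Equiv.Perm ℕ) x := by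
    intro x hx
    have := List.map_inj_left.mp hmaps x (by simpa [tau] using hx)
    exact this
  have hd : ∀ x < NN K hK a', ((g⁻¹ * g' : ↥(aut B)) : Equiv.Perm ℕ) x = x := by
    intro x hx
    have : ((g⁻¹ * g' : ↥(aut B)) : Equiv.Perm ℕ) x =
        ((g : Equiv.Perm ℕ))⁻¹ (((g' : Equiv.Perm ℕ)) x) := rfl
    rw [this, hpt x hx]
    exact (g : Equiv.Perm ℕ).symm_apply_apply x
  have hKd : ((K (g⁻¹ * g') : Equiv.Perm ℕ)) a' = a' := NN_spec K hK a' _ hd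
  have hfact : g' = g * (g⁻¹ * g') := by group
  calc ((K g' : Equiv.Perm ℕ)) a' = ((K (g * (g⁻¹ * g')) : Equiv.Perm ℕ)) a' := by rw [← hfact]
    _ = ((K g : Equiv.Perm ℕ)) (((K (g⁻¹ * g') : Equiv.Perm ℕ)) a') := by rw [map_mul]; rfl
    _ = ((K g : Equiv.Perm ℕ)) a' := by rw [hKd]

lemma IF_map (K : ↥(aut B) →* ↥(aut A)) (hK : StabCond K) (g : ↥(aut B)) {l : List ℕ}
    (hl : IDomP K hK l) :
    IF K hK (List.map (⇑(g : Equiv.Perm ℕ)) l) = ((K g : Equiv.Perm ℕ)) (IF K hK l) := by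
  obtain ⟨a, g₀, rfl⟩ := hl
  rw [IF_spec K hK rfl]
  have hmm : List.map (⇑(g : Equiv.Perm ℕ)) (List.map (⇑(g₀ : Equiv.Perm ℕ)) (tau K hK a)) =
      List.map (⇑((g * g₀ : ↥(aut B)) : Equiv.Perm ℕ)) (tau K hK a) := by
    rw [List.map_map]; rfl
  rw [IF_spec K hK hmm, map_mul]
  rfl

lemma IF_tau (K : ↥(aut B) →* ↥(aut A)) (hK : StabCond K) (a : ℕ) :
    IF K hK (tau K hK a) = a := by
  have h1 : tau K hK a = List.map (⇑((1 : ↥(aut B)) : Equiv.Perm ℕ)) (tau K hK a) := by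
    simp
  rw [IF_spec K hK h1, map_one]
  rfl

/-- The interpretation of `A` in `B` induced by a homomorphism `Aut(B) → Aut(A)`
satisfying the stabilizer condition. -/
noncomputable def interpOf (K : ↥(aut B) →* ↥(aut A)) (hK : StabCond K) : Interp A B where
  Dom := setOf (IDomP K hK)
  eqv := fun l₁ l₂ => IF K hK l₁ = IF K hK l₂
  R := fun i v => A.rel i (fun k => IF K hK (v k)) = true
  F := IF K hK
  dom_inv := by
    rintro g hg l ⟨a, g₀, rfl⟩
    refine ⟨a, ⟨g, hg⟩ * g₀, ?_⟩
    rw [List.map_map]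
    rfl
  eqv_inv := by
    intro g hg l₁ h₁ l₂ h₂ he
    show IF K hK _ = IF K hK _
    rw [IF_map K hK ⟨g, hg⟩ h₁, IF_map K hK ⟨g, hg⟩ h₂]
    exact congrArg _ he
  R_inv := by
    intro i g hg v hv hR
    show A.rel i _ = true
    have h1 : (fun k => IF K hK (List.map (⇑g) (v k))) =
        fun k => ((K ⟨g, hg⟩ : Equiv.Perm ℕ)) (IF K hK (v k)) :=
      funext fun k => IF_map K hK ⟨g, hg⟩ (hv k)
    rw [h1, ← mem_aut (K ⟨g, hg⟩).2 i (fun k => IF K hK (v k))]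
    exact hR
  eqv_refl := fun _ _ => rfl
  eqv_symm := fun _ _ _ _ h => h.symm
  eqv_trans := fun _ _ _ _ _ _ h1 h2 => h1.trans h2
  R_resp := by
    intro i v w _ _ he hR
    show A.rel i _ = true
    have h1 : (fun k => IF K hK (w k)) = fun k => IF K hK (v k) :=
      funext fun k => (he k).symm
    rw [h1]
    exact hR
  F_surj := fun a => ⟨tau K hK a, ⟨a, 1, by simp⟩, IF_tau K hK a⟩
  F_eqv := fun _ _ _ _ => Iff.rfl
  F_rel := fun _ _ _ => Iff.rfl

lemma interpOf_F (K : ↥(aut B) →* ↥(aut A)) (hK : StabCond K) :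
    (interpOf K hK).F = IF K hK := rfl

lemma interpOf_Dom (K : ↥(aut B) →* ↥(aut A)) (hK : StabCond K) :
    (interpOf K hK).Dom = setOf (IDomP K hK) := rfl

end Infra4
section Infra5

open Topology Filter Set

variable {L₁ L₂ : ℕ → ℕ} {M : Str L₁} {N : Str L₂}

lemma baireMeasurableFun_of_continuous {α β : Type*} [TopologicalSpace α] [TopologicalSpace β]
    {f : α → β} (hf : Continuous f) : BaireMeasurableFun f :=
  fun _ hs => (hs.preimage hf).baireMeasurableSet

lemma stabCond_of_BMfun (K : ↥(aut M) →* ↥(aut N))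
    (hBM : BaireMeasurableFun fun h : ↥(aut M) => ((K h : Equiv.Perm ℕ) : ℕ → ℕ)) :
    StabCond K := by
  intro b
  apply stab_of_BM K
  intro b'
  have h1 : {h : ↥(aut M) | ((K h : Equiv.Perm ℕ)) b' = b'} =
      (fun h : ↥(aut M) => ((K h : Equiv.Perm ℕ) : ℕ → ℕ)) ⁻¹' {f : ℕ → ℕ | f b' = b'} := rfl
  rw [h1]
  apply hBM
  have h2 : {f : ℕ → ℕ | f b' = b'} = (fun f : ℕ → ℕ => f b') ⁻¹' {b'} := rfl
  rw [h2]
  exact (isOpen_discrete _).preimage (continuous_apply (A := fun _ : ℕ => ℕ) b')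

lemma continuous_of_stabCond (K : ↥(aut M) →* ↥(aut N)) (hK : StabCond K) :
    Continuous fun h : ↥(aut M) => ((K h : Equiv.Perm ℕ) : ℕ → ℕ) := by
  apply continuous_pi
  intro b
  rw [continuous_discrete_rng]
  intro c
  rw [isOpen_iff_forall_mem_open]
  intro h₀ hh₀
  obtain ⟨n, hn⟩ := hK b
  have hh₀' : ((K h₀ : Equiv.Perm ℕ)) b = c := hh₀
  refine ⟨⋂ x ∈ Finset.range n,
      {h : ↥(aut M) | (h : Equiv.Perm ℕ) x = (h₀ : Equiv.Perm ℕ) x}, ?_, ?_, ?_⟩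
  · intro h hh
    simp only [Set.mem_iInter] at hh
    have hfix : ∀ x < n, ((h₀⁻¹ * h : ↥(aut M)) : Equiv.Perm ℕ) x = x := by
      intro x hx
      have e : ((h₀⁻¹ * h : ↥(aut M)) : Equiv.Perm ℕ) x =
          ((h₀ : Equiv.Perm ℕ))⁻¹ (((h : Equiv.Perm ℕ)) x) := rfl
      rw [e, hh x (Finset.mem_range.mpr hx)]
      exact (h₀ : Equiv.Perm ℕ).symm_apply_apply x
    have hK1 : ((K (h₀⁻¹ * h) : Equiv.Perm ℕ)) b = b := hn _ hfix
    have hfac : h = h₀ * (h₀⁻¹ * h) := by group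
    show ((K h : Equiv.Perm ℕ)) b ∈ ({c} : Set ℕ)
    have : ((K h : Equiv.Perm ℕ)) b = ((K h₀ : Equiv.Perm ℕ)) b := by
      conv_lhs => rw [hfac]
      rw [map_mul]
      show ((K h₀ : Equiv.Perm ℕ)) (((K (h₀⁻¹ * h) : Equiv.Perm ℕ)) b) = _
      rw [hK1]
    rw [this, hh₀']
    rfl
  · exact isOpen_biInter_finset fun x _ => isOpen_aut_fix M x ((h₀ : Equiv.Perm ℕ) x)
  · simp

lemma continuous_subtype_of_stabCond (K : ↥(aut M) →* ↥(aut N)) (hK : StabCond K) :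
    Continuous (fun h : ↥(aut M) => K h) := by
  have h1 : Continuous (fun h : ↥(aut M) => ((K h : ↥(aut N)) : Equiv.Perm ℕ)) :=
    continuous_induced_rng.mpr (continuous_of_stabCond K hK)
  exact h1.subtype_mk _

/-- The stabilizer condition for the inverse of a continuous bijective homomorphism,
via the Lusin–Souslin theorem and Pettis' theorem. -/
lemma stabCond_inverse (K : ↥(aut M) →* ↥(aut N)) (K' : ↥(aut N) →* ↥(aut M))
    (hKst : StabCond K) (hKinj : Function.Injective K)
    (hid : ∀ h, K (K' h) = h) : StabCond K' := by
  have hKc : Continuous (fun g : ↥(aut M) => K g) := continuous_subtype_of_stabCond K hKst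
  intro b
  apply stab_of_BM K'
  intro c
  have himeq : {h : ↥(aut N) | ((K' h : Equiv.Perm ℕ)) c = c} =
      (fun g : ↥(aut M) => K g) '' {g : ↥(aut M) | ((g : Equiv.Perm ℕ)) c = c} := by
    ext h
    simp only [Set.mem_setOf_eq, Set.mem_image]
    constructor
    · intro hh
      exact ⟨K' h, hh, hid h⟩
    · rintro ⟨g, hg, rfl⟩
      have : K' (K g) = g := hKinj (hid (K g))
      rw [this]
      exact hg
  rw [himeq]
  borelize ↥(aut M) ↥(aut N)
  have hms : MeasurableSet {g : ↥(aut M) | ((g : Equiv.Perm ℕ)) c = c} :=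
    (isOpen_aut_fix M c c).measurableSet
  exact (hms.image_of_continuousOn_injOn hKc.continuousOn hKinj.injOn).baireMeasurableSet

variable {LA LB : ℕ → ℕ} {A : Str LA} {B : Str LB}

/-- The bi-interpretation induced by a pair of mutually inverse homomorphisms
between the automorphism groups, both satisfying the stabilizer condition. -/
noncomputable def biOf (K : ↥(aut B) →* ↥(aut A)) (K' : ↥(aut A) →* ↥(aut B))
    (hK : StabCond K) (hK' : StabCond K')
    (h1 : ∀ g, K' (K g) = g) (h2 : ∀ h, K (K' h) = h) : BiInterp A B where
  I := interpOf K hK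
  J := interpOf K' hK'
  comp_def_B := by
    intro g hg LL hLL hJ
    simp only [interpOf_F] at *
    have e1 : List.map (IF K hK) (List.map (List.map ⇑g) LL) =
        List.map (⇑((K ⟨g, hg⟩ : Equiv.Perm ℕ))) (List.map (IF K hK) LL) := by
      rw [List.map_map, List.map_map]
      apply List.map_congr_left
      intro l hl
      exact IF_map K hK ⟨g, hg⟩ (hLL l hl)
    rw [e1, IF_map K' hK' (K ⟨g, hg⟩) hJ, h1]
  comp_def_A := by
    intro h hh LL hLL hI
    simp only [interpOf_F] at *
    have e1 : List.map (IF K' hK') (List.map (List.map ⇑h) LL) =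
        List.map (⇑((K' ⟨h, hh⟩ : Equiv.Perm ℕ))) (List.map (IF K' hK') LL) := by
      rw [List.map_map, List.map_map]
      apply List.map_congr_left
      intro l hl
      exact IF_map K' hK' ⟨h, hh⟩ (hLL l hl)
    rw [e1, IF_map K hK (K' ⟨h, hh⟩) hI, h2]

end Infra5
section Infra6

open Topology Filter Set

variable {LA LB : ℕ → ℕ} {A : Str LA} {B : Str LB}

/-- A choice of representative tuple for each element of `A`. -/
noncomputable def lA (I : Interp A B) (a : ℕ) : List ℕ := (I.F_surj a).choose

lemma lA_mem (I : Interp A B) (a : ℕ) : lA I a ∈ I.Dom := (I.F_surj a).choose_spec.1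

lemma lA_F (I : Interp A B) (a : ℕ) : I.F (lA I a) = a := (I.F_surj a).choose_spec.2

/-- The function `G_I(g)` induced on `A` by an automorphism `g` of `B`. -/
noncomputable def phiFun (I : Interp A B) (g : ↥(aut B)) (a : ℕ) : ℕ :=
  I.F (List.map (⇑(g : Equiv.Perm ℕ)) (lA I a))

lemma phi_eq (I : Interp A B) (g : ↥(aut B)) {l : List ℕ} (hl : l ∈ I.Dom) :
    I.F (List.map (⇑(g : Equiv.Perm ℕ)) l) = phiFun I g (I.F l) := by
  have hmem : lA I (I.F l) ∈ I.Dom := lA_mem I (I.F l)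
  have heqv : I.eqv l (lA I (I.F l)) := by
    apply (I.F_eqv l hl _ hmem).mp
    rw [lA_F]
  have heqv2 : I.eqv (List.map (⇑(g : Equiv.Perm ℕ)) l)
      (List.map (⇑(g : Equiv.Perm ℕ)) (lA I (I.F l))) :=
    I.eqv_inv (g : Equiv.Perm ℕ) g.2 l hl _ hmem heqv
  exact (I.F_eqv _ (I.dom_inv (g : Equiv.Perm ℕ) g.2 l hl) _
    (I.dom_inv (g : Equiv.Perm ℕ) g.2 _ hmem)).mpr heqv2

lemma map_inv_map (g : ↥(aut B)) (l : List ℕ) :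
    List.map (⇑((g⁻¹ : ↥(aut B)) : Equiv.Perm ℕ)) (List.map (⇑(g : Equiv.Perm ℕ)) l) = l := by
  rw [List.map_map]
  have h : (⇑((g⁻¹ : ↥(aut B)) : Equiv.Perm ℕ) ∘ ⇑(g : Equiv.Perm ℕ)) = id :=
    funext fun x => (g : Equiv.Perm ℕ).symm_apply_apply x
  rw [h, List.map_id]

lemma phi_inv (I : Interp A B) (g : ↥(aut B)) (a : ℕ) :
    phiFun I g⁻¹ (phiFun I g a) = a := by
  have h1 : phiFun I g a = I.F (List.map (⇑(g : Equiv.Perm ℕ)) (lA I a)) := rfl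
  have hmem : List.map (⇑(g : Equiv.Perm ℕ)) (lA I a) ∈ I.Dom :=
    I.dom_inv _ g.2 _ (lA_mem I a)
  have h2 := phi_eq I g⁻¹ hmem
  rw [map_inv_map g (lA I a)] at h2
  rw [h1, ← h2, lA_F]

/-- `G_I(g)` as a permutation of `ω`. -/
noncomputable def phiPerm (I : Interp A B) (g : ↥(aut B)) : Equiv.Perm ℕ :=
  ⟨phiFun I g, phiFun I g⁻¹, fun a => phi_inv I g a, fun a => by
    have := phi_inv I g⁻¹ a
    rwa [inv_inv] at this⟩

lemma phiPerm_mem (I : Interp A B) (g : ↥(aut B)) : phiPerm I g ∈ aut A := by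
  intro i v
  have hvmem : ∀ k, lA I (v k) ∈ I.Dom := fun k => lA_mem I (v k)
  have hgmem : ∀ k, List.map (⇑(g : Equiv.Perm ℕ)) (lA I (v k)) ∈ I.Dom :=
    fun k => I.dom_inv _ g.2 _ (hvmem k)
  have hF : (fun k => I.F (lA I (v k))) = v := funext fun k => lA_F I (v k)
  have h1 : I.R i (fun k => lA I (v k)) ↔ A.rel i v = true := by
    have := I.F_rel i (fun k => lA I (v k)) hvmem
    rwa [hF] at this
  have h2 : I.R i (fun k => List.map (⇑(g : Equiv.Perm ℕ)) (lA I (v k))) ↔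
      A.rel i (fun k => phiFun I g (v k)) = true := by
    have h := I.F_rel i (fun k => List.map (⇑(g : Equiv.Perm ℕ)) (lA I (v k))) hgmem
    have he : (fun k => I.F (List.map (⇑(g : Equiv.Perm ℕ)) (lA I (v k)))) =
        fun k => phiFun I g (v k) := by
      funext k
      rw [phi_eq I g (hvmem k), lA_F]
    rwa [he] at h
  have h3 : I.R i (fun k => lA I (v k)) ↔
      I.R i (fun k => List.map (⇑(g : Equiv.Perm ℕ)) (lA I (v k))) := by
    constructor
    · intro h
      exact I.R_inv i _ g.2 _ hvmem h
    · intro h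
      have h' := I.R_inv i _ (g⁻¹ : ↥(aut B)).2 _ hgmem h
      have he : (fun k => List.map (⇑((g⁻¹ : ↥(aut B)) : Equiv.Perm ℕ))
          (List.map (⇑(g : Equiv.Perm ℕ)) (lA I (v k)))) = fun k => lA I (v k) :=
        funext fun k => map_inv_map g (lA I (v k))
      rwa [he] at h'
  have hiff : (A.rel i v = true) ↔ (A.rel i (fun k => phiFun I g (v k)) = true) :=
    (h1.symm.trans h3).trans h2
  exact Bool.coe_iff_coe.mp hiff

lemma phiPerm_mul (I : Interp A B) (g₁ g₂ : ↥(aut B)) :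
    phiPerm I (g₁ * g₂) = phiPerm I g₁ * phiPerm I g₂ := by
  apply Equiv.ext
  intro a
  show phiFun I (g₁ * g₂) a = phiFun I g₁ (phiFun I g₂ a)
  have h2 : phiFun I g₂ a = I.F (List.map (⇑(g₂ : Equiv.Perm ℕ)) (lA I a)) := rfl
  have hmem : List.map (⇑(g₂ : Equiv.Perm ℕ)) (lA I a) ∈ I.Dom :=
    I.dom_inv _ g₂.2 _ (lA_mem I a)
  have h1 := phi_eq I g₁ hmem
  rw [← h2] at h1
  rw [← h1]
  show phiFun I (g₁ * g₂) a = _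
  have hmm : List.map (⇑(g₁ : Equiv.Perm ℕ)) (List.map (⇑(g₂ : Equiv.Perm ℕ)) (lA I a)) =
      List.map (⇑((g₁ * g₂ : ↥(aut B)) : Equiv.Perm ℕ)) (lA I a) := by
    rw [List.map_map]
    rfl
  rw [hmm]
  rfl

/-- The homomorphism `G_I : Aut(B) → Aut(A)` induced by an interpretation of `A` in `B`. -/
noncomputable def PhiHom (I : Interp A B) : ↥(aut B) →* ↥(aut A) :=
  MonoidHom.mk' (fun g => ⟨phiPerm I g, phiPerm_mem I g⟩)
    (fun g₁ g₂ => Subtype.ext (phiPerm_mul I g₁ g₂))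

lemma PhiHom_apply (I : Interp A B) (g : ↥(aut B)) (a : ℕ) :
    ((PhiHom I g : Equiv.Perm ℕ)) a = I.F (List.map (⇑(g : Equiv.Perm ℕ)) (lA I a)) := rfl

lemma PhiHom_F (I : Interp A B) (g : ↥(aut B)) {l : List ℕ} (hl : l ∈ I.Dom) :
    I.F (List.map (⇑(g : Equiv.Perm ℕ)) l) = ((PhiHom I g : Equiv.Perm ℕ)) (I.F l) :=
  phi_eq I g hl

lemma continuous_PhiHom (I : Interp A B) :
    Continuous fun g : ↥(aut B) => ((PhiHom I g : Equiv.Perm ℕ) : ℕ → ℕ) := by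
  apply continuous_pi
  intro a
  rw [continuous_discrete_rng]
  intro c
  rw [isOpen_iff_forall_mem_open]
  intro g₀ hg₀
  refine ⟨⋂ x ∈ (lA I a).toFinset,
      {g : ↥(aut B) | (g : Equiv.Perm ℕ) x = (g₀ : Equiv.Perm ℕ) x}, ?_, ?_, ?_⟩
  · intro g hg
    simp only [Set.mem_iInter, List.mem_toFinset, Set.mem_setOf_eq] at hg
    have hmaps : List.map (⇑(g : Equiv.Perm ℕ)) (lA I a) =
        List.map (⇑(g₀ : Equiv.Perm ℕ)) (lA I a) :=
      List.map_congr_left fun x hx => hg x hx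
    show ((PhiHom I g : Equiv.Perm ℕ)) a ∈ ({c} : Set ℕ)
    rw [Set.mem_singleton_iff, PhiHom_apply, hmaps, ← PhiHom_apply]
    exact hg₀
  · exact isOpen_biInter_finset fun x _ => isOpen_aut_fix B x ((g₀ : Equiv.Perm ℕ) x)
  · simp

/-- One half of the bi-interpretability identities: `G_J ∘ G_I = id`. -/
lemma PhiHom_comp (bi : BiInterp A B) (g : ↥(aut B)) : PhiHom bi.J (PhiHom bi.I g) = g := by
  apply Subtype.ext
  apply Equiv.ext
  intro b
  set LL := List.map (fun a => lA bi.I a) (lA bi.J b) with hLL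
  have c2 : ∀ l ∈ LL, l ∈ bi.I.Dom := by
    intro l hl
    obtain ⟨a, _, rfl⟩ := List.mem_map.mp hl
    exact lA_mem bi.I a
  have c1 : List.map bi.I.F LL = lA bi.J b := by
    rw [hLL, List.map_map]
    have : (bi.I.F ∘ fun a => lA bi.I a) = id := funext fun a => lA_F bi.I a
    rw [this, List.map_id]
  have hcd := bi.comp_def_B (g : Equiv.Perm ℕ) g.2 LL c2 (by rw [c1]; exact lA_mem bi.J b)
  rw [c1] at hcd
  have e : List.map bi.I.F (List.map (List.map (⇑(g : Equiv.Perm ℕ))) LL) =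
      List.map (⇑((PhiHom bi.I g : ↥(aut A)) : Equiv.Perm ℕ)) (lA bi.J b) := by
    rw [hLL, List.map_map, List.map_map]
    apply List.map_congr_left
    intro a _
    show bi.I.F (List.map (⇑(g : Equiv.Perm ℕ)) (lA bi.I a)) = _
    rfl
  rw [e] at hcd
  show bi.J.F (List.map (⇑((PhiHom bi.I g : ↥(aut A)) : Equiv.Perm ℕ)) (lA bi.J b)) = _
  rw [hcd, lA_F]

/-- The other half: `G_I ∘ G_J = id`. -/
lemma PhiHom_comp' (bi : BiInterp A B) (h : ↥(aut A)) : PhiHom bi.I (PhiHom bi.J h) = h := by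
  apply Subtype.ext
  apply Equiv.ext
  intro a
  set LL := List.map (fun b => lA bi.J b) (lA bi.I a) with hLL
  have c2 : ∀ l ∈ LL, l ∈ bi.J.Dom := by
    intro l hl
    obtain ⟨b, _, rfl⟩ := List.mem_map.mp hl
    exact lA_mem bi.J b
  have c1 : List.map bi.J.F LL = lA bi.I a := by
    rw [hLL, List.map_map]
    have : (bi.J.F ∘ fun b => lA bi.J b) = id := funext fun b => lA_F bi.J b
    rw [this, List.map_id]
  have hcd := bi.comp_def_A (h : Equiv.Perm ℕ) h.2 LL c2 (by rw [c1]; exact lA_mem bi.I a)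
  rw [c1] at hcd
  have e : List.map bi.J.F (List.map (List.map (⇑(h : Equiv.Perm ℕ))) LL) =
      List.map (⇑((PhiHom bi.J h : ↥(aut B)) : Equiv.Perm ℕ)) (lA bi.I a) := by
    rw [hLL, List.map_map, List.map_map]
    apply List.map_congr_left
    intro b _
    show bi.J.F (List.map (⇑(h : Equiv.Perm ℕ)) (lA bi.J b)) = _
    rfl
  rw [e] at hcd
  show bi.I.F (List.map (⇑((PhiHom bi.J h : ↥(aut B)) : Equiv.Perm ℕ)) (lA bi.I a)) = _
  rw [hcd, lA_F]

/-- The Baire-measurable (indeed continuous) isomorphism induced by a bi-interpretation. -/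
noncomputable def EquivOfBi (bi : BiInterp A B) : ↥(aut A) ≃* ↥(aut B) where
  toFun := fun h => PhiHom bi.J h
  invFun := fun g => PhiHom bi.I g
  left_inv := fun h => PhiHom_comp' bi h
  right_inv := fun g => PhiHom_comp bi g
  map_mul' := fun h₁ h₂ => map_mul (PhiHom bi.J) h₁ h₂

end Infra6

end Paper
namespace Paper

/-- **Theorem 1.7.** Two countable structures `A` and `B` are infinitarily
bi-interpretable if and only if their automorphism groups are Baire-measurably
isomorphic.  Furthermore, every continuous isomorphism from `Aut(B)` onto `Aut(A)`
is of the form `G_I` for some infinitary interpretation `I` of `A` in `B` which is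
part of an infinitary bi-interpretation of `A` and `B`. -/
theorem biinterpretable_iff_baire_iso (LA LB : ℕ → ℕ) (A : Str LA) (B : Str LB) :
    (Nonempty (BiInterp A B) ↔
      ∃ H : ↥(aut A) ≃* ↥(aut B),
        BaireMeasurableFun fun g : ↥(aut A) => ((H g : Equiv.Perm ℕ) : ℕ → ℕ)) ∧
    (∀ H : ↥(aut B) →* ↥(aut A), Function.Bijective H →
      (Continuous fun g : ↥(aut B) => ((H g : Equiv.Perm ℕ) : ℕ → ℕ)) →
      ∃ bi : BiInterp A B, ∀ (g : ↥(aut B)), ∀ l ∈ bi.I.Dom,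
        (H g : Equiv.Perm ℕ) (bi.I.F l) = bi.I.F (List.map (⇑(g : Equiv.Perm ℕ)) l)) := by
  constructor
  · constructor
    · rintro ⟨bi⟩
      refine ⟨EquivOfBi bi, ?_⟩
      have h : (fun g : ↥(aut A) => (((EquivOfBi bi) g : Equiv.Perm ℕ) : ℕ → ℕ)) =
          fun g : ↥(aut A) => ((PhiHom bi.J g : Equiv.Perm ℕ) : ℕ → ℕ) := rfl
      rw [h]
      exact baireMeasurableFun_of_continuous (continuous_PhiHom bi.J)
    · rintro ⟨H, hBM⟩
      have hstabH : StabCond H.toMonoidHom := stabCond_of_BMfun H.toMonoidHom hBM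
      have hid : ∀ h, H.toMonoidHom (H.symm.toMonoidHom h) = h := fun h =>
        H.apply_symm_apply h
      have hstabK : StabCond H.symm.toMonoidHom :=
        stabCond_inverse H.toMonoidHom H.symm.toMonoidHom hstabH H.injective hid
      exact ⟨biOf H.symm.toMonoidHom H.toMonoidHom hstabK hstabH
        (fun g => H.apply_symm_apply g) (fun h => H.symm_apply_apply h)⟩
  · intro H hbij hcont
    have hstabH : StabCond H := stabCond_of_BMfun H (baireMeasurableFun_of_continuous hcont)
    set E := MulEquiv.ofBijective H hbij with hE
    have hid : ∀ h, H (E.symm.toMonoidHom h) = h := fun h => E.apply_symm_apply h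
    have hstabK' : StabCond E.symm.toMonoidHom :=
      stabCond_inverse H E.symm.toMonoidHom hstabH hbij.injective hid
    refine ⟨biOf H E.symm.toMonoidHom hstabH hstabK'
      (fun g => E.symm_apply_apply g) (fun h => hid h), ?_⟩
    intro g l hl
    exact (IF_map H hstabH g hl).symm

end Paper
end

section
/- Let B and A be countable structures. For every infinitary bi-interpretation (I, J) of A and B (I an interpretation of A in B and J an interpretation of B in A, with the composite coded isomorphisms definable), the induced functors F_I : Iso(B) → Iso(A) and F_J : Iso(A) → Iso(B) form a Borel adjoint equivalence of the categories Iso(B) and Iso(A). -/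
namespace Paper

def Isomorphic {L : ℕ → ℕ} (M N : Str L) : Prop := ∃ g : ℕ ≃ ℕ, IsIso M N g

/-- The copies of `B`: structures with domain `ω` isomorphic to `B`.  These are the
objects of the category `Iso(B)`; the morphisms are the isomorphisms between copies. -/
abbrev Copy {L : ℕ → ℕ} (B : Str L) := {M : Str L // Isomorphic M B}

def selfCopy {L : ℕ → ℕ} (B : Str L) : Copy B := ⟨B, ⟨Equiv.refl ℕ, isIso_refl B⟩⟩

/-- A functor from `Iso(B)` to `Iso(A)`: it maps copies of `B` to copies of `A` and
isomorphisms between copies of `B` to isomorphisms between the corresponding copies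
of `A`, preserving identity and composition (Definition 1.8). -/
structure IsoFunctor {LB LA : ℕ → ℕ} (B : Str LB) (A : Str LA) where
  obj : Copy B → Copy A
  map : ∀ (M N : Copy B) (g : ℕ ≃ ℕ), IsIso M.1 N.1 g → (ℕ ≃ ℕ)
  map_iso : ∀ M N g hg, IsIso (obj M).1 (obj N).1 (map M N g hg)
  map_id : ∀ (M : Copy B) (h : IsIso M.1 M.1 (Equiv.refl ℕ)),
    map M M (Equiv.refl ℕ) h = Equiv.refl ℕ
  map_comp : ∀ (M N P : Copy B) (g₁ : ℕ ≃ ℕ) (h₁ : IsIso M.1 N.1 g₁)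
    (g₂ : ℕ ≃ ℕ) (h₂ : IsIso N.1 P.1 g₂) (h₃ : IsIso M.1 P.1 (g₁.trans g₂)),
    map M P (g₁.trans g₂) h₃ = (map M N g₁ h₁).trans (map N P g₂ h₂)

/-- Codes of structures with domain `ω` as elements of Cantor space. -/
abbrev ObjCode (L : ℕ → ℕ) := (Σ i : ℕ, (Fin (L i) → ℕ)) → Bool

def codeStr {L : ℕ → ℕ} (M : Str L) : ObjCode L := fun p => M.rel p.1 p.2

/-- A functor is Borel if its action on objects and its action on morphisms are
given by Borel operators on the codes. -/
def IsBorelFunctor {LB LA : ℕ → ℕ} {B : Str LB} {A : Str LA} (F : IsoFunctor B A) : Prop :=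
  ∃ (Φ : ObjCode LB → ObjCode LA) (Ψ : ObjCode LB × (ℕ → ℕ) × ObjCode LB → (ℕ → ℕ)),
    Measurable Φ ∧ Measurable Ψ ∧
    (∀ M : Copy B, codeStr (F.obj M).1 = Φ (codeStr M.1)) ∧
    (∀ M N g hg, ⇑(F.map M N g hg) = Ψ (codeStr M.1, ⇑g, codeStr N.1))

/-- Natural isomorphism of functors `Iso(B) → Iso(A)` (Definition 1.9). -/
def NatIso {LB LA : ℕ → ℕ} {B : Str LB} {A : Str LA} (F G : IsoFunctor B A) : Prop :=
  ∃ η : Copy B → (ℕ ≃ ℕ),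
    (∀ M, IsIso (F.obj M).1 (G.obj M).1 (η M)) ∧
    (∀ (M N : Copy B) (g : ℕ ≃ ℕ) (hg : IsIso M.1 N.1 g),
      (η M).trans (G.map M N g hg) = (F.map M N g hg).trans (η N))

end Paper
namespace Paper

/-- An adjoint equivalence between the categories `Iso(B)` and `Iso(A)`
(Definition 1.11): functors in both directions together with natural isomorphisms
`η : id → G∘F` and `ε : id → F∘G` satisfying the triangle identities
`F(η_M) = ε_{F(M)}` and `G(ε_N) = η_{G(N)}`. -/
structure AdjEquiv {LB LA : ℕ → ℕ} (B : Str LB) (A : Str LA) where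
  F : IsoFunctor B A
  G : IsoFunctor A B
  η : Copy B → (ℕ ≃ ℕ)
  ε : Copy A → (ℕ ≃ ℕ)
  η_iso : ∀ M : Copy B, IsIso M.1 (G.obj (F.obj M)).1 (η M)
  ε_iso : ∀ N : Copy A, IsIso N.1 (F.obj (G.obj N)).1 (ε N)
  η_nat : ∀ (M M' : Copy B) (g : ℕ ≃ ℕ) (hg : IsIso M.1 M'.1 g),
    (η M).trans (G.map (F.obj M) (F.obj M') (F.map M M' g hg) (F.map_iso M M' g hg)) =
      g.trans (η M')
  ε_nat : ∀ (N N' : Copy A) (g : ℕ ≃ ℕ) (hg : IsIso N.1 N'.1 g),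
    (ε N).trans (F.map (G.obj N) (G.obj N') (G.map N N' g hg) (G.map_iso N N' g hg)) =
      g.trans (ε N')
  triangleF : ∀ M : Copy B, F.map M (G.obj (F.obj M)) (η M) (η_iso M) = ε (F.obj M)
  triangleG : ∀ N : Copy A, G.map N (F.obj (G.obj N)) (ε N) (ε_iso N) = η (G.obj N)

/-- An adjoint equivalence is Borel if `F`, `G`, `η` and `ε` are given by Borel
operators on the codes. -/
def IsBorelAdjEquiv {LB LA : ℕ → ℕ} {B : Str LB} {A : Str LA} (E : AdjEquiv B A) : Prop :=
  IsBorelFunctor E.F ∧ IsBorelFunctor E.G ∧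
    (∃ u : ObjCode LB → (ℕ → ℕ), Measurable u ∧ ∀ M : Copy B, u (codeStr M.1) = ⇑(E.η M)) ∧
    (∃ v : ObjCode LA → (ℕ → ℕ), Measurable v ∧ ∀ N : Copy A, v (codeStr N.1) = ⇑(E.ε N))

end Paper
namespace Paper

/-- The domain of the interpretation `I`, transferred to a copy `M` of `B`
(the set defined in `M` by the same `L_{ω₁ω}` definition that defines `I.Dom` in `B`). -/
def DomIn {LA LB : ℕ → ℕ} {A : Str LA} {B : Str LB} (I : Interp A B) (M : Copy B) :
    Set (List ℕ) :=
  {l | ∀ g : ℕ ≃ ℕ, IsIso M.1 B g → List.map (⇑g) l ∈ I.Dom}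

/-- The equivalence relation of `I`, transferred to a copy `M` of `B`. -/
def EqvIn {LA LB : ℕ → ℕ} {A : Str LA} {B : Str LB} (I : Interp A B) (M : Copy B)
    (l₁ l₂ : List ℕ) : Prop :=
  ∀ g : ℕ ≃ ℕ, IsIso M.1 B g → I.eqv (List.map (⇑g) l₁) (List.map (⇑g) l₂)

/-- The relations of `I`, transferred to a copy `M` of `B`. -/
def RIn {LA LB : ℕ → ℕ} {A : Str LA} {B : Str LB} (I : Interp A B) (M : Copy B)
    (k : ℕ) (v : Fin (LA k) → List ℕ) : Prop :=
  ∀ g : ℕ ≃ ℕ, IsIso M.1 B g → I.R k fun t => List.map (⇑g) (v t)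

/-- `FI` is (a presentation of) the functor `F_I : Iso(B) → Iso(A)` induced by the
interpretation `I`, via the bijections `τ^M : ω → Dom^M/∼`: for each copy `M` of `B`,
`τ M` enumerates the `∼`-classes of the transferred domain without repetition, the
structure `FI.obj M` is the pullback of the interpreted structure along `τ M`, and
`FI.map` is given by `h ↦ (τ^N)⁻¹ ∘ h̃ ∘ τ^M`. -/
def InducedBy {LA LB : ℕ → ℕ} {A : Str LA} {B : Str LB} (I : Interp A B)
    (FI : IsoFunctor B A) (τ : Copy B → ℕ → List ℕ) : Prop :=
  ∀ M : Copy B,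
    (∀ a : ℕ, τ M a ∈ DomIn I M) ∧
    (∀ l ∈ DomIn I M, ∃ a : ℕ, EqvIn I M (τ M a) l) ∧
    (∀ a b : ℕ, EqvIn I M (τ M a) (τ M b) → a = b) ∧
    (∀ (k : ℕ) (v : Fin (LA k) → ℕ),
      (FI.obj M).1.rel k v = true ↔ RIn I M k fun t => τ M (v t)) ∧
    (∀ (N : Copy B) (g : ℕ ≃ ℕ) (hg : IsIso M.1 N.1 g) (a : ℕ),
      EqvIn I N (τ N (FI.map M N g hg a)) (List.map (⇑g) (τ M a)))

end Paper
namespace Paper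
section Selector

open scoped Classical

variable {L : ℕ → ℕ}

/-- `getD` with default `0`. -/
def lget (l : List ℕ) (k : ℕ) : ℕ := l.getD k 0

theorem lget_map (f : ℕ → ℕ) (l : List ℕ) {i : ℕ} (h : i < l.length) :
    lget (l.map f) i = f (lget l i) := by
  unfold lget
  rw [List.getD_eq_getElem _ _ (by simpa using h), List.getD_eq_getElem _ _ h, List.getElem_map]

/-- The pair `p` of tuples (one from the structure coded by `x`, one from `B`) is a
partial isomorphism at the atomic level. -/
def Atom (B : Str L) (x : ObjCode L) (p : List ℕ × List ℕ) : Prop :=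
  p.1.length = p.2.length ∧
  (∀ i < p.1.length, ∀ j < p.1.length, (lget p.1 i = lget p.1 j ↔ lget p.2 i = lget p.2 j)) ∧
  (∀ i (v : Fin (L i) → ℕ), (∀ k, v k < p.1.length) →
    x ⟨i, fun k => lget p.1 (v k)⟩ = B.rel i fun k => lget p.2 (v k))

/-- Transfinite back-and-forth relations between the structure coded by `x` and `B`. -/
noncomputable def BF (B : Str L) : Ordinal.{0} → ObjCode L → List ℕ × List ℕ → Prop :=
  Ordinal.lt_wf.fix fun α rec x p =>
    Atom B x p ∧ ∀ β (h : β < α),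
      rec β h x p ∧ (∀ a, ∃ b, rec β h x (p.1 ++ [a], p.2 ++ [b])) ∧
        (∀ b, ∃ a, rec β h x (p.1 ++ [a], p.2 ++ [b]))

theorem BF_iff (B : Str L) (α : Ordinal) (x : ObjCode L) (p : List ℕ × List ℕ) :
    BF B α x p ↔ (Atom B x p ∧ ∀ β < α,
      BF B β x p ∧ (∀ a, ∃ b, BF B β x (p.1 ++ [a], p.2 ++ [b])) ∧
        (∀ b, ∃ a, BF B β x (p.1 ++ [a], p.2 ++ [b]))) := by
  have := congrFun (congrFun (WellFounded.fix_eq Ordinal.lt_wf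
    (fun α (rec : ∀ β, β < α → ObjCode L → List ℕ × List ℕ → Prop) x p =>
      Atom B x p ∧ ∀ β (h : β < α),
        rec β h x p ∧ (∀ a, ∃ b, rec β h x (p.1 ++ [a], p.2 ++ [b])) ∧
          (∀ b, ∃ a, rec β h x (p.1 ++ [a], p.2 ++ [b]))) α) x) p
  exact this ▸ Iff.rfl

theorem BF.mono {B : Str L} {α β : Ordinal} {x : ObjCode L} {p : List ℕ × List ℕ}
    (h : β ≤ α) (hb : BF B α x p) : BF B β x p := by
  rcases eq_or_lt_of_le h with rfl | hlt
  · exact hb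
  · exact (((BF_iff B α x p).mp hb).2 β hlt).1

theorem BF.atom {B : Str L} {α : Ordinal} {x : ObjCode L} {p : List ℕ × List ℕ}
    (hb : BF B α x p) : Atom B x p := ((BF_iff B α x p).mp hb).1

theorem lt_succ_ord (α : Ordinal) : α < α + 1 := by
  rw [Ordinal.add_one_eq_succ]; exact Order.lt_succ α

theorem BF.ext1 {B : Str L} {α : Ordinal} {x : ObjCode L} {p : List ℕ × List ℕ}
    (hb : BF B (α + 1) x p) :
    (∀ a, ∃ b, BF B α x (p.1 ++ [a], p.2 ++ [b])) ∧
      (∀ b, ∃ a, BF B α x (p.1 ++ [a], p.2 ++ [b])) :=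
  (((BF_iff B (α+1) x p).mp hb).2 α (lt_succ_ord α)).2

end Selector
section Selector2
variable {L : ℕ → ℕ}

theorem codeStr_apply {M : Str L} {i : ℕ} {w : Fin (L i) → ℕ} :
    codeStr M ⟨i, w⟩ = M.rel i w := rfl

/-- Tuples related by an isomorphism are back-and-forth equivalent at every level. -/
theorem bf_of_iso {M B : Str L} {e : ℕ ≃ ℕ} (he : IsIso M B e) :
    ∀ (α : Ordinal) (s : List ℕ), BF B α (codeStr M) (s, s.map e) := by
  intro α
  induction α using Ordinal.induction with
  | h α IH =>
    intro s
    rw [BF_iff]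
    refine ⟨⟨(List.length_map _).symm, ?_, ?_⟩, fun β hβ => ⟨IH β hβ s, ?_, ?_⟩⟩
    · intro i hi j hj
      simp only [List.length_map] at *
      rw [lget_map _ _ hi, lget_map _ _ hj]
      exact (Equiv.apply_eq_iff_eq e).symm
    · intro i v hv
      simp only [List.length_map] at hv
      rw [codeStr_apply, he i]
      exact congrArg (B.rel i) (funext fun k => (lget_map _ _ (hv k)).symm)
    · intro a
      exact ⟨e a, by simpa [List.map_append] using IH β hβ (s ++ [a])⟩
    · intro b
      refine ⟨e.symm b, ?_⟩
      have := IH β hβ (s ++ [e.symm b])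
      simpa [List.map_append] using this

/-- Back-and-forth relations transfer along an isomorphism. -/
theorem bf_transfer {M B : Str L} {e : ℕ ≃ ℕ} (he : IsIso M B e) :
    ∀ (α : Ordinal) (s t : List ℕ),
      BF B α (codeStr M) (s, t) ↔ BF B α (codeStr B) (s.map e, t) := by
  intro α
  induction α using Ordinal.induction with
  | h α IH =>
    intro s t
    rw [BF_iff, BF_iff]
    have hatom : Atom B (codeStr M) (s, t) ↔ Atom B (codeStr B) (s.map e, t) := by
      unfold Atom
      simp only [List.length_map]
      refine and_congr Iff.rfl (and_congr ?_ ?_)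
      · constructor
        · intro H i hi j hj
          rw [lget_map _ _ hi, lget_map _ _ hj, Equiv.apply_eq_iff_eq]
          exact H i hi j hj
        · intro H i hi j hj
          have := H i hi j hj
          rwa [lget_map _ _ hi, lget_map _ _ hj, Equiv.apply_eq_iff_eq] at this
      · constructor
        · intro H i v hv
          rw [codeStr_apply]
          have h1 : (B.rel i fun k => lget (s.map e) (v k)) =
              B.rel i fun k => e (lget s (v k)) :=
            congrArg (B.rel i) (funext fun k => lget_map _ _ (hv k))
          rw [h1, ← he i]
          exact H i v hv
        · intro H i v hv
          have h0 := H i v hv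
          rw [codeStr_apply] at h0 ⊢
          have h1 : (B.rel i fun k => lget (s.map e) (v k)) =
              B.rel i fun k => e (lget s (v k)) :=
            congrArg (B.rel i) (funext fun k => lget_map _ _ (hv k))
          rw [h1] at h0
          rw [he i]
          exact h0
    refine and_congr hatom (forall_congr' fun β => forall_congr' fun hβ =>
      and_congr (IH β hβ s t) (and_congr ?_ ?_))
    · constructor
      · intro H a'
        obtain ⟨b, hb⟩ := H (e.symm a')
        refine ⟨b, ?_⟩
        have := (IH β hβ (s ++ [e.symm a']) (t ++ [b])).mp hb
        simpa [List.map_append] using this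
      · intro H a
        obtain ⟨b, hb⟩ := H (e a)
        refine ⟨b, (IH β hβ (s ++ [a]) (t ++ [b])).mpr ?_⟩
        simpa [List.map_append] using hb
    · constructor
      · intro H b
        obtain ⟨a, ha⟩ := H b
        exact ⟨e a, by simpa [List.map_append] using (IH β hβ (s ++ [a]) (t ++ [b])).mp ha⟩
      · intro H b
        obtain ⟨a, ha⟩ := H b
        refine ⟨e.symm a, (IH β hβ (s ++ [e.symm a]) (t ++ [b])).mpr ?_⟩
        simpa [List.map_append] using ha

end Selector2
section Selector3
variable {L : ℕ → ℕ}

theorem exists_stab (B : Str L) : ∃ α, α < (Cardinal.aleph 1).ord ∧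
    ∀ p, BF B (α + 1) (codeStr B) p ↔ BF B α (codeStr B) p := by
  by_contra hcon
  push_neg at hcon
  have key : ∀ α : Set.Iio (Cardinal.aleph 1).ord, ∃ p : List ℕ × List ℕ,
      BF B α.1 (codeStr B) p ∧ ¬ BF B (α.1 + 1) (codeStr B) p := by
    rintro ⟨α, hα⟩
    obtain ⟨p, hp⟩ := hcon α hα
    rcases hp with ⟨h1, h2⟩ | ⟨h1, h2⟩
    · exact False.elim (h2 (h1.mono (le_of_lt (lt_succ_ord α))))
    · exact ⟨p, h2, h1⟩
  choose f hf1 hf2 using key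
  have finj : Function.Injective f := by
    rintro ⟨α, hα⟩ ⟨α', hα'⟩ heq
    by_contra hne
    have hne' : α ≠ α' := fun h => hne (by simpa using h)
    rcases lt_or_gt_of_ne hne' with h | h
    · have hle : (α + 1) ≤ α' := by rw [Ordinal.add_one_eq_succ]; exact Order.succ_le_iff.mpr h
      exact hf2 ⟨α, hα⟩ (heq ▸ (hf1 ⟨α', hα'⟩).mono hle)
    · have hle : (α' + 1) ≤ α := by rw [Ordinal.add_one_eq_succ]; exact Order.succ_le_iff.mpr h
      exact hf2 ⟨α', hα'⟩ (heq ▸ (hf1 ⟨α, hα⟩).mono hle)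
  have finj2 : Function.Injective (fun z : Set.Iio (Cardinal.aleph 1).ord =>
      ULift.up.{1} (f z)) := fun a b h => finj (by simpa using h)
  have hle := Cardinal.mk_le_of_injective finj2
  rw [Ordinal.mk_Iio_ordinal, Cardinal.mk_uLift, Cardinal.card_ord] at hle
  have hle2 : Cardinal.lift.{1} (Cardinal.aleph 1) ≤ Cardinal.lift.{1} Cardinal.aleph0 :=
    hle.trans (Cardinal.lift_le.mpr Cardinal.mk_le_aleph0)
  exact absurd (Cardinal.lift_le.mp hle2) (not_le.mpr Cardinal.aleph0_lt_aleph_one)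

/-- The stabilization ordinal of the back-and-forth hierarchy on `B`. -/
noncomputable def astar (B : Str L) : Ordinal.{0} :=
  sInf {α | α < (Cardinal.aleph 1).ord ∧
    ∀ p, BF B (α + 1) (codeStr B) p ↔ BF B α (codeStr B) p}

theorem astar_mem (B : Str L) : astar B < (Cardinal.aleph 1).ord ∧
    ∀ p, BF B (astar B + 1) (codeStr B) p ↔ BF B (astar B) (codeStr B) p :=
  csInf_mem (exists_stab B)

theorem card_le_of_lt_omega1 {o : Ordinal.{0}} (h : o < (Cardinal.aleph 1).ord) :
    o.card ≤ Cardinal.aleph0 := by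
  have h1 := Cardinal.lt_ord.mp h
  have h0 : Cardinal.aleph 1 = Order.succ Cardinal.aleph0 := by
    rw [show (1 : Ordinal) = (0 : Ordinal) + 1 by simp, Ordinal.add_one_eq_succ,
      Cardinal.aleph_succ, Cardinal.aleph_zero]
  rw [h0, Order.lt_succ_iff] at h1
  exact h1

theorem countable_Iio {o : Ordinal.{0}} (h : o.card ≤ Cardinal.aleph0) :
    Countable (Set.Iio o) := by
  rw [← Cardinal.mk_le_aleph0_iff, Ordinal.mk_Iio_ordinal]
  calc Cardinal.lift.{1} o.card ≤ Cardinal.lift.{1} Cardinal.aleph0 := Cardinal.lift_le.mpr h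
    _ = Cardinal.aleph0 := Cardinal.lift_aleph0

theorem meas_Atom (B : Str L) (p : List ℕ × List ℕ) :
    MeasurableSet {x : ObjCode L | Atom B x p} := by
  have hset : {x : ObjCode L | Atom B x p} =
      ({x : ObjCode L | p.1.length = p.2.length ∧
        (∀ i < p.1.length, ∀ j < p.1.length,
          (lget p.1 i = lget p.1 j ↔ lget p.2 i = lget p.2 j))}) ∩
      ⋂ (i : ℕ), ⋂ (v : Fin (L i) → ℕ),
        {x : ObjCode L | (∀ k, v k < p.1.length) →
          x ⟨i, fun k => lget p.1 (v k)⟩ = B.rel i fun k => lget p.2 (v k)} := by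
    ext x
    simp only [Set.mem_inter_iff, Set.mem_iInter, Set.mem_setOf_eq, Atom]
    tauto
  rw [hset]
  refine (MeasurableSet.const _).inter
    (MeasurableSet.iInter fun i => MeasurableSet.iInter fun v => ?_)
  by_cases hv : ∀ k, v k < p.1.length
  · have h2 : {x : ObjCode L | (∀ k, v k < p.1.length) →
        x ⟨i, fun k => lget p.1 (v k)⟩ = B.rel i fun k => lget p.2 (v k)} =
        (fun x : ObjCode L => x ⟨i, fun k => lget p.1 (v k)⟩) ⁻¹'
          {B.rel i fun k => lget p.2 (v k)} := by
      ext x; simp [hv]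
    rw [h2]
    exact (measurable_pi_apply _) (measurableSet_singleton _)
  · have h2 : {x : ObjCode L | (∀ k, v k < p.1.length) →
        x ⟨i, fun k => lget p.1 (v k)⟩ = B.rel i fun k => lget p.2 (v k)} = Set.univ := by
      ext x; simp [hv]
    rw [h2]
    exact MeasurableSet.univ

theorem meas_BF (B : Str L) :
    ∀ α : Ordinal.{0}, α.card ≤ Cardinal.aleph0 →
      ∀ p, MeasurableSet {x : ObjCode L | BF B α x p} := by
  intro α
  induction α using Ordinal.induction with
  | h α IH =>
    intro hα p
    haveI : Countable (Set.Iio α) := countable_Iio hα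
    have hset : {x : ObjCode L | BF B α x p} =
        {x : ObjCode L | Atom B x p} ∩
        ⋂ (β : Set.Iio α),
          ({x : ObjCode L | BF B β.1 x p} ∩
           (⋂ (a : ℕ), ⋃ (b : ℕ), {x : ObjCode L | BF B β.1 x (p.1 ++ [a], p.2 ++ [b])}) ∩
           (⋂ (b : ℕ), ⋃ (a : ℕ), {x : ObjCode L | BF B β.1 x (p.1 ++ [a], p.2 ++ [b])})) := by
      ext x
      constructor
      · intro hx
        obtain ⟨h1, h2⟩ := (BF_iff B α x p).mp hx
        refine ⟨h1, ?_⟩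
        simp only [Set.mem_iInter, Set.mem_inter_iff, Set.mem_iUnion, Set.mem_setOf_eq]
        rintro ⟨β, hβ⟩
        exact ⟨⟨(h2 β hβ).1, fun a => (h2 β hβ).2.1 a⟩, fun b => (h2 β hβ).2.2 b⟩
      · intro hx
        obtain ⟨h1, h2⟩ := hx
        simp only [Set.mem_iInter, Set.mem_inter_iff, Set.mem_iUnion, Set.mem_setOf_eq] at h2
        refine (BF_iff B α x p).mpr ⟨h1, fun β hβ => ?_⟩
        obtain ⟨⟨ha, hb⟩, hc⟩ := h2 ⟨β, hβ⟩
        exact ⟨ha, fun a => hb a, fun b => hc b⟩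
    rw [hset]
    refine (meas_Atom B p).inter (MeasurableSet.iInter fun β => ?_)
    have hβ : β.1.card ≤ Cardinal.aleph0 := le_trans (Ordinal.card_le_card β.2.le) hα
    refine MeasurableSet.inter (MeasurableSet.inter (IH β.1 β.2 hβ p) ?_) ?_
    · exact MeasurableSet.iInter fun a => MeasurableSet.iUnion fun b => IH β.1 β.2 hβ _
    · exact MeasurableSet.iInter fun b => MeasurableSet.iUnion fun a => IH β.1 β.2 hβ _

end Selector3
section Selector4
open scoped Classical

variable {L : ℕ → ℕ}

/-- Pick the least extension of the `B`-side tuple matching a new element `m`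
on the `M`-side. -/
noncomputable def pickb (B : Str L) (x : ObjCode L) (p : List ℕ × List ℕ) (m : ℕ) : ℕ :=
  if h : ∃ b, BF B (astar B) x (p.1 ++ [m], p.2 ++ [b]) then Nat.find h else 0

/-- Pick the least extension of the `M`-side tuple matching a new element `m`
on the `B`-side. -/
noncomputable def picka (B : Str L) (x : ObjCode L) (p : List ℕ × List ℕ) (m : ℕ) : ℕ :=
  if h : ∃ a, BF B (astar B) x (p.1 ++ [a], p.2 ++ [m]) then Nat.find h else 0

/-- A single step of the greedy back-and-forth construction. -/
noncomputable def gstep (B : Str L) (x : ObjCode L) (k : ℕ) (p : List ℕ × List ℕ) :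
    List ℕ × List ℕ :=
  if k % 2 = 0 then
    (if k / 2 ∈ p.1 then p else (p.1 ++ [k / 2], p.2 ++ [pickb B x p (k / 2)]))
  else
    (if k / 2 ∈ p.2 then p else (p.1 ++ [picka B x p (k / 2)], p.2 ++ [k / 2]))

/-- The greedy back-and-forth sequence of partial isomorphisms. -/
noncomputable def gq (B : Str L) (x : ObjCode L) : ℕ → List ℕ × List ℕ
  | 0 => ([], [])
  | k + 1 => gstep B x k (gq B x k)

/-- The selected isomorphism (forward direction). -/
noncomputable def gfun (B : Str L) (x : ObjCode L) (n : ℕ) : ℕ :=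
  lget (gq B x (2 * n + 1)).2 (List.idxOf n (gq B x (2 * n + 1)).1)

/-- The selected isomorphism (backward direction). -/
noncomputable def ginv (B : Str L) (x : ObjCode L) (n : ℕ) : ℕ :=
  lget (gq B x (2 * n + 2)).1 (List.idxOf n (gq B x (2 * n + 2)).2)

theorem astar_card (B : Str L) : (astar B).card ≤ Cardinal.aleph0 :=
  card_le_of_lt_omega1 (astar_mem B).1

theorem meas_BFstar (B : Str L) (p : List ℕ × List ℕ) :
    MeasurableSet {x : ObjCode L | BF B (astar B) x p} :=
  meas_BF B (astar B) (astar_card B) p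

theorem pickb_eq_iff (B : Str L) (x : ObjCode L) (p : List ℕ × List ℕ) (m c : ℕ) :
    pickb B x p m = c ↔
      ((BF B (astar B) x (p.1 ++ [m], p.2 ++ [c]) ∧
        ∀ b < c, ¬ BF B (astar B) x (p.1 ++ [m], p.2 ++ [b])) ∨
       (c = 0 ∧ ∀ b, ¬ BF B (astar B) x (p.1 ++ [m], p.2 ++ [b]))) := by
  unfold pickb
  by_cases h : ∃ b, BF B (astar B) x (p.1 ++ [m], p.2 ++ [b])
  · rw [dif_pos h, Nat.find_eq_iff h]
    constructor
    · exact fun hh => Or.inl hh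
    · rintro (hh | ⟨rfl, hh⟩)
      · exact hh
      · exact absurd h (by push_neg; exact hh)
  · rw [dif_neg h]
    push_neg at h
    constructor
    · rintro rfl; exact Or.inr ⟨rfl, h⟩
    · rintro (⟨hc, _⟩ | ⟨rfl, _⟩)
      · exact absurd hc (h c)
      · rfl

theorem picka_eq_iff (B : Str L) (x : ObjCode L) (p : List ℕ × List ℕ) (m c : ℕ) :
    picka B x p m = c ↔
      ((BF B (astar B) x (p.1 ++ [c], p.2 ++ [m]) ∧
        ∀ a < c, ¬ BF B (astar B) x (p.1 ++ [a], p.2 ++ [m])) ∨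
       (c = 0 ∧ ∀ a, ¬ BF B (astar B) x (p.1 ++ [a], p.2 ++ [m]))) := by
  unfold picka
  by_cases h : ∃ a, BF B (astar B) x (p.1 ++ [a], p.2 ++ [m])
  · rw [dif_pos h, Nat.find_eq_iff h]
    constructor
    · exact fun hh => Or.inl hh
    · rintro (hh | ⟨rfl, hh⟩)
      · exact hh
      · exact absurd h (by push_neg; exact hh)
  · rw [dif_neg h]
    push_neg at h
    constructor
    · rintro rfl; exact Or.inr ⟨rfl, h⟩
    · rintro (⟨hc, _⟩ | ⟨rfl, _⟩)
      · exact absurd hc (h c)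
      · rfl

theorem meas_pickb (B : Str L) (p : List ℕ × List ℕ) (m c : ℕ) :
    MeasurableSet {x : ObjCode L | pickb B x p m = c} := by
  have hset : {x : ObjCode L | pickb B x p m = c} =
      (({x | BF B (astar B) x (p.1 ++ [m], p.2 ++ [c])} ∩
        ⋂ (b : ℕ), ⋂ (_ : b < c), {x | BF B (astar B) x (p.1 ++ [m], p.2 ++ [b])}ᶜ) ∪
       ({x : ObjCode L | c = 0} ∩
        ⋂ (b : ℕ), {x | BF B (astar B) x (p.1 ++ [m], p.2 ++ [b])}ᶜ)) := by
    ext x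
    simp only [Set.mem_union, Set.mem_inter_iff, Set.mem_iInter, Set.mem_compl_iff,
      Set.mem_setOf_eq, pickb_eq_iff]
  rw [hset]
  refine MeasurableSet.union ?_ ?_
  · exact (meas_BFstar B _).inter (MeasurableSet.iInter fun b =>
      MeasurableSet.iInter fun _ => (meas_BFstar B _).compl)
  · exact (MeasurableSet.const _).inter
      (MeasurableSet.iInter fun b => (meas_BFstar B _).compl)

theorem meas_picka (B : Str L) (p : List ℕ × List ℕ) (m c : ℕ) :
    MeasurableSet {x : ObjCode L | picka B x p m = c} := by
  have hset : {x : ObjCode L | picka B x p m = c} =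
      (({x | BF B (astar B) x (p.1 ++ [c], p.2 ++ [m])} ∩
        ⋂ (a : ℕ), ⋂ (_ : a < c), {x | BF B (astar B) x (p.1 ++ [a], p.2 ++ [m])}ᶜ) ∪
       ({x : ObjCode L | c = 0} ∩
        ⋂ (a : ℕ), {x | BF B (astar B) x (p.1 ++ [a], p.2 ++ [m])}ᶜ)) := by
    ext x
    simp only [Set.mem_union, Set.mem_inter_iff, Set.mem_iInter, Set.mem_compl_iff,
      Set.mem_setOf_eq, picka_eq_iff]
  rw [hset]
  refine MeasurableSet.union ?_ ?_
  · exact (meas_BFstar B _).inter (MeasurableSet.iInter fun a =>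
      MeasurableSet.iInter fun _ => (meas_BFstar B _).compl)
  · exact (MeasurableSet.const _).inter
      (MeasurableSet.iInter fun a => (meas_BFstar B _).compl)

theorem meas_append_pick (B : Str L) (p' : List ℕ × List ℕ) (m : ℕ) (p : List ℕ × List ℕ)
    (pick : ObjCode L → ℕ) (hpick : ∀ c, MeasurableSet {x : ObjCode L | pick x = c})
    (side : Bool) :
    MeasurableSet {x : ObjCode L |
      (if side then (p'.1 ++ [m], p'.2 ++ [pick x]) else (p'.1 ++ [pick x], p'.2 ++ [m])) = p} := by
  cases side
  · simp only [Bool.false_eq_true, if_false]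
    by_cases hp : p.2 = p'.2 ++ [m] ∧ ∃ c₀, p.1 = p'.1 ++ [c₀]
    · obtain ⟨h2, c₀, h1⟩ := hp
      have hset : {x : ObjCode L | (p'.1 ++ [pick x], p'.2 ++ [m]) = p} =
          {x | pick x = c₀} := by
        ext x
        simp only [Set.mem_setOf_eq, Prod.ext_iff, h1, h2]
        constructor
        · rintro ⟨ha, _⟩
          have := List.append_cancel_left ha
          simpa using this
        · rintro rfl; simp
      rw [hset]; exact hpick c₀
    · have hset : {x : ObjCode L | (p'.1 ++ [pick x], p'.2 ++ [m]) = p} = ∅ := by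
        ext x
        simp only [Set.mem_setOf_eq, Set.mem_empty_iff_false, iff_false, Prod.ext_iff]
        rintro ⟨h1, h2⟩
        exact hp ⟨h2.symm, pick x, h1.symm⟩
      rw [hset]; exact MeasurableSet.empty
  · simp only [if_true]
    by_cases hp : p.1 = p'.1 ++ [m] ∧ ∃ c₀, p.2 = p'.2 ++ [c₀]
    · obtain ⟨h1, c₀, h2⟩ := hp
      have hset : {x : ObjCode L | (p'.1 ++ [m], p'.2 ++ [pick x]) = p} =
          {x | pick x = c₀} := by
        ext x
        simp only [Set.mem_setOf_eq, Prod.ext_iff, h1, h2]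
        constructor
        · rintro ⟨_, ha⟩
          have := List.append_cancel_left ha
          simpa using this
        · rintro rfl; simp
      rw [hset]; exact hpick c₀
    · have hset : {x : ObjCode L | (p'.1 ++ [m], p'.2 ++ [pick x]) = p} = ∅ := by
        ext x
        simp only [Set.mem_setOf_eq, Set.mem_empty_iff_false, iff_false, Prod.ext_iff]
        rintro ⟨h1, h2⟩
        exact hp ⟨h1.symm, pick x, h2.symm⟩
      rw [hset]; exact MeasurableSet.empty

theorem meas_gstep (B : Str L) (k : ℕ) (p' p : List ℕ × List ℕ) :
    MeasurableSet {x : ObjCode L | gstep B x k p' = p} := by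
  unfold gstep
  by_cases hk : k % 2 = 0
  · simp only [hk, if_true]
    by_cases hm : k / 2 ∈ p'.1
    · simp only [hm, if_true]
      exact MeasurableSet.const _
    · simp only [hm, if_false]
      have := meas_append_pick B p' (k / 2) p (fun x => pickb B x p' (k / 2))
        (fun c => meas_pickb B p' (k / 2) c) true
      simpa using this
  · simp only [hk, if_false]
    by_cases hm : k / 2 ∈ p'.2
    · simp only [hm, if_true]
      exact MeasurableSet.const _
    · simp only [hm, if_false]
      have := meas_append_pick B p' (k / 2) p (fun x => picka B x p' (k / 2))
        (fun c => meas_picka B p' (k / 2) c) false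
      simpa using this

theorem meas_gq (B : Str L) (k : ℕ) (p : List ℕ × List ℕ) :
    MeasurableSet {x : ObjCode L | gq B x k = p} := by
  induction k generalizing p with
  | zero =>
    have : {x : ObjCode L | gq B x 0 = p} = {_x : ObjCode L | (([], []) : List ℕ × List ℕ) = p} := rfl
    rw [this]; exact MeasurableSet.const _
  | succ k IH =>
    have hset : {x : ObjCode L | gq B x (k + 1) = p} =
        ⋃ (p' : List ℕ × List ℕ), ({x | gq B x k = p'} ∩ {x | gstep B x k p' = p}) := by
      ext x
      simp only [Set.mem_iUnion, Set.mem_inter_iff, Set.mem_setOf_eq]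
      constructor
      · intro h
        exact ⟨gq B x k, rfl, h⟩
      · rintro ⟨p', h1, h2⟩
        show gstep B x k (gq B x k) = p
        rw [h1]; exact h2
    rw [hset]
    exact MeasurableSet.iUnion fun p' => (IH p').inter (meas_gstep B k p' p)

theorem meas_gfun (B : Str L) : Measurable (gfun B) := by
  refine measurable_pi_lambda _ fun n => ?_
  apply measurable_to_countable
  intro y
  have hset : (fun x => gfun B x n) ⁻¹' {gfun B y n} =
      ⋃ (p : List ℕ × List ℕ),
        ({x | gq B x (2 * n + 1) = p} ∩
         {_x : ObjCode L | lget p.2 (List.idxOf n p.1) = gfun B y n}) := by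
    ext x
    simp only [Set.mem_preimage, Set.mem_singleton_iff, Set.mem_iUnion, Set.mem_inter_iff,
      Set.mem_setOf_eq]
    constructor
    · intro h
      exact ⟨gq B x (2 * n + 1), rfl, h⟩
    · rintro ⟨p, h1, h2⟩
      show lget (gq B x (2*n+1)).2 (List.idxOf n (gq B x (2*n+1)).1) = _
      rw [h1]; exact h2
  rw [hset]
  exact MeasurableSet.iUnion fun p => (meas_gq B _ p).inter (MeasurableSet.const _)

theorem meas_ginv (B : Str L) : Measurable (ginv B) := by
  refine measurable_pi_lambda _ fun n => ?_
  apply measurable_to_countable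
  intro y
  have hset : (fun x => ginv B x n) ⁻¹' {ginv B y n} =
      ⋃ (p : List ℕ × List ℕ),
        ({x | gq B x (2 * n + 2) = p} ∩
         {_x : ObjCode L | lget p.1 (List.idxOf n p.2) = ginv B y n}) := by
    ext x
    simp only [Set.mem_preimage, Set.mem_singleton_iff, Set.mem_iUnion, Set.mem_inter_iff,
      Set.mem_setOf_eq]
    constructor
    · intro h
      exact ⟨gq B x (2 * n + 2), rfl, h⟩
    · rintro ⟨p, h1, h2⟩
      show lget (gq B x (2*n+2)).1 (List.idxOf n (gq B x (2*n+2)).2) = _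
      rw [h1]; exact h2
  rw [hset]
  exact MeasurableSet.iUnion fun p => (meas_gq B _ p).inter (MeasurableSet.const _)

end Selector4
section Selector5
open scoped Classical

variable {L : ℕ → ℕ}

theorem lget_eq {l : List ℕ} {i : ℕ} (h : i < l.length) : lget l i = l[i] :=
  List.getD_eq_getElem l 0 h

theorem lget_concat_last (l : List ℕ) (a : ℕ) : lget (l ++ [a]) l.length = a := by
  rw [lget_eq (by simp)]
  exact List.getElem_concat_length rfl _

theorem lget_concat_lt {l : List ℕ} {i : ℕ} (a : ℕ) (h : i < l.length) :
    lget (l ++ [a]) i = lget l i := by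
  rw [lget_eq (by simp; omega), lget_eq h]
  exact List.getElem_append_left h

theorem atom_len {B : Str L} {x : ObjCode L} {p : List ℕ × List ℕ} (hA : Atom B x p) :
    p.1.length = p.2.length := hA.1

theorem atom_notmem2 {B : Str L} {x : ObjCode L} {s t : List ℕ} {a b : ℕ}
    (hA : Atom B x (s ++ [a], t ++ [b])) (ha : a ∉ s) : b ∉ t := by
  intro hb
  obtain ⟨j, hj, hbj⟩ := List.getElem_of_mem hb
  have hlen : s.length = t.length := by
    have := hA.1; simpa using this
  have hpat := hA.2.1 s.length (by simp) j (by simp; omega)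
  have h2 : lget (t ++ [b]) s.length = lget (t ++ [b]) j := by
    rw [hlen, lget_concat_last, lget_concat_lt b hj, lget_eq hj, hbj]
  have h1 := hpat.mpr h2
  rw [lget_concat_last, lget_concat_lt a (by omega : j < s.length),
    lget_eq (by omega : j < s.length)] at h1
  exact ha (h1 ▸ List.getElem_mem (by omega : j < s.length))

theorem atom_notmem1 {B : Str L} {x : ObjCode L} {s t : List ℕ} {a b : ℕ}
    (hA : Atom B x (s ++ [a], t ++ [b])) (hb : b ∉ t) : a ∉ s := by
  intro ha
  obtain ⟨j, hj, haj⟩ := List.getElem_of_mem ha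
  have hlen : s.length = t.length := by
    have := hA.1; simpa using this
  have hpat := hA.2.1 s.length (by simp) j (by simp; omega)
  have h1 : lget (s ++ [a]) s.length = lget (s ++ [a]) j := by
    rw [lget_concat_last, lget_concat_lt a hj, lget_eq hj, haj]
  have h2 := hpat.mp h1
  rw [hlen, lget_concat_last, lget_concat_lt b (hlen ▸ hj),
    lget_eq (hlen ▸ hj)] at h2
  exact hb (h2 ▸ List.getElem_mem (hlen ▸ hj))

section Orbit

variable {M B : Str L} {e₀ : ℕ ≃ ℕ} (he : IsIso M B e₀)

include he

theorem bf_succ_orbit {p : List ℕ × List ℕ} (hp : BF B (astar B) (codeStr M) p) :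
    BF B (astar B + 1) (codeStr M) p := by
  have h1 := (bf_transfer he (astar B) p.1 p.2).mp hp
  have h2 := ((astar_mem B).2 _).mpr h1
  exact (bf_transfer he (astar B + 1) p.1 p.2).mpr h2

theorem ext_forth {p : List ℕ × List ℕ} (hp : BF B (astar B) (codeStr M) p) (m : ℕ) :
    ∃ b, BF B (astar B) (codeStr M) (p.1 ++ [m], p.2 ++ [b]) :=
  (BF.ext1 (bf_succ_orbit he hp)).1 m

theorem ext_back {p : List ℕ × List ℕ} (hp : BF B (astar B) (codeStr M) p) (m : ℕ) :
    ∃ a, BF B (astar B) (codeStr M) (p.1 ++ [a], p.2 ++ [m]) :=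
  (BF.ext1 (bf_succ_orbit he hp)).2 m

theorem gq_bf : ∀ k, BF B (astar B) (codeStr M) (gq B (codeStr M) k) ∧
    (gq B (codeStr M) k).1.Nodup ∧ (gq B (codeStr M) k).2.Nodup := by
  intro k
  induction k with
  | zero =>
    refine ⟨?_, by simp [gq], by simp [gq]⟩
    exact bf_of_iso he (astar B) []
  | succ k IH =>
    obtain ⟨hR, hnd1, hnd2⟩ := IH
    have hstep : gq B (codeStr M) (k+1) = gstep B (codeStr M) k (gq B (codeStr M) k) := rfl
    rw [hstep]
    set p := gq B (codeStr M) k with hp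
    unfold gstep
    by_cases hk : k % 2 = 0
    · simp only [hk, if_true]
      by_cases hm : k / 2 ∈ p.1
      · simp only [hm, if_true]; exact ⟨hR, hnd1, hnd2⟩
      · simp only [hm, if_false]
        have hex := ext_forth he hR (k / 2)
        have hpick : pickb B (codeStr M) p (k / 2) = Nat.find hex := by
          unfold pickb; rw [dif_pos hex]
        have hnew : BF B (astar B) (codeStr M) (p.1 ++ [k / 2], p.2 ++ [pickb B (codeStr M) p (k / 2)]) := by
          rw [hpick]; exact Nat.find_spec hex
        have hb2 : pickb B (codeStr M) p (k / 2) ∉ p.2 := atom_notmem2 hnew.atom hm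
        exact ⟨hnew, by simp [List.nodup_append, hnd1, hm]; rintro a ha rfl; exact hm ha,
          by simp [List.nodup_append, hnd2, hb2]; rintro a ha rfl; exact hb2 ha⟩
    · simp only [hk, if_false]
      by_cases hm : k / 2 ∈ p.2
      · simp only [hm, if_true]; exact ⟨hR, hnd1, hnd2⟩
      · simp only [hm, if_false]
        have hex := ext_back he hR (k / 2)
        have hpick : picka B (codeStr M) p (k / 2) = Nat.find hex := by
          unfold picka; rw [dif_pos hex]
        have hnew : BF B (astar B) (codeStr M) (p.1 ++ [picka B (codeStr M) p (k / 2)], p.2 ++ [k / 2]) := by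
          rw [hpick]; exact Nat.find_spec hex
        have ha1 : picka B (codeStr M) p (k / 2) ∉ p.1 := atom_notmem1 hnew.atom hm
        exact ⟨hnew, by simp [List.nodup_append, hnd1, ha1]; rintro a ha rfl; exact ha1 ha,
          by simp [List.nodup_append, hnd2, hm]; rintro a ha rfl; exact hm ha⟩

theorem gq_len (k : ℕ) :
    (gq B (codeStr M) k).1.length = (gq B (codeStr M) k).2.length :=
  atom_len (gq_bf he k).1.atom

end Orbit

theorem gq_prefix (B : Str L) (x : ObjCode L) (k : ℕ) :
    (gq B x k).1 <+: (gq B x (k+1)).1 ∧ (gq B x k).2 <+: (gq B x (k+1)).2 := by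
  rw [show gq B x (k+1) = gstep B x k (gq B x k) from rfl]
  unfold gstep
  by_cases hk : k % 2 = 0
  · simp only [hk, if_true]
    by_cases hm : k / 2 ∈ (gq B x k).1
    · simp [hm, List.prefix_refl]
    · simp [hm, List.prefix_append]
  · simp only [hk, if_false]
    by_cases hm : k / 2 ∈ (gq B x k).2
    · simp [hm, List.prefix_refl]
    · simp [hm, List.prefix_append]

theorem gq_prefix_le (B : Str L) (x : ObjCode L) {k K : ℕ} (h : k ≤ K) :
    (gq B x k).1 <+: (gq B x K).1 ∧ (gq B x k).2 <+: (gq B x K).2 := by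
  induction K with
  | zero =>
    have : k = 0 := Nat.le_zero.mp h
    subst this; exact ⟨List.prefix_refl _, List.prefix_refl _⟩
  | succ K IH =>
    rcases Nat.lt_or_ge k (K+1) with h' | h'
    · have hkK : k ≤ K := Nat.lt_succ_iff.mp h'
      exact ⟨(IH hkK).1.trans (gq_prefix B x K).1, (IH hkK).2.trans (gq_prefix B x K).2⟩
    · have : k = K + 1 := le_antisymm h h'
      subst this; exact ⟨List.prefix_refl _, List.prefix_refl _⟩

theorem gq_mem1 (B : Str L) (x : ObjCode L) (n : ℕ) : n ∈ (gq B x (2*n+1)).1 := by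
  show n ∈ (gstep B x (2*n) (gq B x (2*n))).1
  unfold gstep
  have h2 : (2*n) % 2 = 0 := by omega
  have h3 : (2*n) / 2 = n := by omega
  simp only [h2, if_true, h3]
  by_cases hm : n ∈ (gq B x (2*n)).1
  · simpa [hm] using hm
  · simp [hm]

theorem gq_mem2 (B : Str L) (x : ObjCode L) (n : ℕ) : n ∈ (gq B x (2*n+2)).2 := by
  show n ∈ (gstep B x (2*n+1) (gq B x (2*n+1))).2
  unfold gstep
  have h2 : (2*n+1) % 2 ≠ 0 := by omega
  have h3 : (2*n+1) / 2 = n := by omega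
  simp only [if_neg h2, h3]
  by_cases hm : n ∈ (gq B x (2*n+1)).2
  · simpa [hm] using hm
  · simp [hm]

end Selector5
section Selector6
open scoped Classical

variable {L : ℕ → ℕ} {M B : Str L} {e₀ : ℕ ≃ ℕ}

theorem lookup_eq1 (he : IsIso M B e₀) {k K : ℕ} (hkK : k ≤ K) {i j : ℕ}
    (hi : i < (gq B (codeStr M) k).1.length) (hj : j < (gq B (codeStr M) K).1.length)
    (h : lget (gq B (codeStr M) k).1 i = lget (gq B (codeStr M) K).1 j) :
    lget (gq B (codeStr M) k).2 i = lget (gq B (codeStr M) K).2 j := by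
  have hpre := gq_prefix_le B (codeStr M) hkK
  have hi' : i < (gq B (codeStr M) K).1.length := lt_of_lt_of_le hi hpre.1.length_le
  have heq1 : (gq B (codeStr M) K).1[i] = (gq B (codeStr M) k).1[i] :=
    (hpre.1.getElem hi).symm
  have hij : i = j := by
    have hnd := (gq_bf he K).2.1
    refine (List.Nodup.getElem_inj_iff hnd (hi := hi') (hj := hj)).mp ?_
    rw [heq1, ← lget_eq hi, ← lget_eq hj, h]
  subst hij
  have hlen_k := gq_len he k
  have hlen_K := gq_len he K
  rw [lget_eq (hlen_k ▸ hi), lget_eq (hlen_K ▸ hi')]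
  exact hpre.2.getElem (hlen_k ▸ hi)

theorem lookup_eq2 (he : IsIso M B e₀) {k K : ℕ} (hkK : k ≤ K) {i j : ℕ}
    (hi : i < (gq B (codeStr M) k).2.length) (hj : j < (gq B (codeStr M) K).2.length)
    (h : lget (gq B (codeStr M) k).2 i = lget (gq B (codeStr M) K).2 j) :
    lget (gq B (codeStr M) k).1 i = lget (gq B (codeStr M) K).1 j := by
  have hpre := gq_prefix_le B (codeStr M) hkK
  have hi' : i < (gq B (codeStr M) K).2.length := lt_of_lt_of_le hi hpre.2.length_le
  have heq1 : (gq B (codeStr M) K).2[i] = (gq B (codeStr M) k).2[i] :=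
    (hpre.2.getElem hi).symm
  have hij : i = j := by
    have hnd := (gq_bf he K).2.2
    refine (List.Nodup.getElem_inj_iff hnd (hi := hi') (hj := hj)).mp ?_
    rw [heq1, ← lget_eq hi, ← lget_eq hj, h]
  subst hij
  have hlen_k := gq_len he k
  have hlen_K := gq_len he K
  rw [lget_eq (hlen_k ▸ hi), lget_eq (hlen_K ▸ hi')]
  exact hpre.1.getElem (hlen_k ▸ hi)

theorem gfun_spec (he : IsIso M B e₀) (K : ℕ) {j : ℕ}
    (hj : j < (gq B (codeStr M) K).1.length) :
    gfun B (codeStr M) (lget (gq B (codeStr M) K).1 j) = lget (gq B (codeStr M) K).2 j := by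
  set n := lget (gq B (codeStr M) K).1 j with hn
  set k := 2 * n + 1 with hk
  have hmem : n ∈ (gq B (codeStr M) k).1 := gq_mem1 B (codeStr M) n
  have hi : List.idxOf n (gq B (codeStr M) k).1 < (gq B (codeStr M) k).1.length :=
    List.idxOf_lt_length_iff.mpr hmem
  have hval : lget (gq B (codeStr M) k).1 (List.idxOf n (gq B (codeStr M) k).1) = n := by
    rw [lget_eq hi]; exact List.getElem_idxOf hi
  show lget (gq B (codeStr M) k).2 (List.idxOf n (gq B (codeStr M) k).1) = _
  rcases Nat.le_total k K with hkK | hKk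
  · exact lookup_eq1 he hkK hi hj (hval.trans hn)
  · exact (lookup_eq1 he hKk hj hi (hval.trans hn).symm).symm

theorem ginv_spec (he : IsIso M B e₀) (K : ℕ) {j : ℕ}
    (hj : j < (gq B (codeStr M) K).2.length) :
    ginv B (codeStr M) (lget (gq B (codeStr M) K).2 j) = lget (gq B (codeStr M) K).1 j := by
  set n := lget (gq B (codeStr M) K).2 j with hn
  set k := 2 * n + 2 with hk
  have hmem : n ∈ (gq B (codeStr M) k).2 := gq_mem2 B (codeStr M) n
  have hi : List.idxOf n (gq B (codeStr M) k).2 < (gq B (codeStr M) k).2.length :=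
    List.idxOf_lt_length_iff.mpr hmem
  have hval : lget (gq B (codeStr M) k).2 (List.idxOf n (gq B (codeStr M) k).2) = n := by
    rw [lget_eq hi]; exact List.getElem_idxOf hi
  show lget (gq B (codeStr M) k).1 (List.idxOf n (gq B (codeStr M) k).2) = _
  rcases Nat.le_total k K with hkK | hKk
  · exact lookup_eq2 he hkK hi hj (hval.trans hn)
  · exact (lookup_eq2 he hKk hj hi (hval.trans hn).symm).symm

theorem gfun_ginv (he : IsIso M B e₀) (n : ℕ) :
    ginv B (codeStr M) (gfun B (codeStr M) n) = n := by
  set k := 2 * n + 1 with hk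
  have hmem : n ∈ (gq B (codeStr M) k).1 := gq_mem1 B (codeStr M) n
  have hi : List.idxOf n (gq B (codeStr M) k).1 < (gq B (codeStr M) k).1.length :=
    List.idxOf_lt_length_iff.mpr hmem
  have hval : lget (gq B (codeStr M) k).1 (List.idxOf n (gq B (codeStr M) k).1) = n := by
    rw [lget_eq hi]; exact List.getElem_idxOf hi
  have hlen := gq_len he k
  have h1 : gfun B (codeStr M) n = lget (gq B (codeStr M) k).2
      (List.idxOf n (gq B (codeStr M) k).1) := rfl
  rw [h1, ginv_spec he k (hlen ▸ hi), hval]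

theorem ginv_gfun (he : IsIso M B e₀) (n : ℕ) :
    gfun B (codeStr M) (ginv B (codeStr M) n) = n := by
  set k := 2 * n + 2 with hk
  have hmem : n ∈ (gq B (codeStr M) k).2 := gq_mem2 B (codeStr M) n
  have hi : List.idxOf n (gq B (codeStr M) k).2 < (gq B (codeStr M) k).2.length :=
    List.idxOf_lt_length_iff.mpr hmem
  have hval : lget (gq B (codeStr M) k).2 (List.idxOf n (gq B (codeStr M) k).2) = n := by
    rw [lget_eq hi]; exact List.getElem_idxOf hi
  have hlen := gq_len he k
  have h1 : ginv B (codeStr M) n = lget (gq B (codeStr M) k).1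
      (List.idxOf n (gq B (codeStr M) k).2) := rfl
  rw [h1, gfun_spec he k (hlen ▸ hi), hval]

/-- The Borel isomorphism selector: a measurable assignment of codes to isomorphisms,
correct on the isomorphism class of `B`. -/
theorem selector_ok {M B : Str L} (h : Isomorphic M B) :
    ∃ e : ℕ ≃ ℕ, IsIso M B e ∧ gfun B (codeStr M) = ⇑e ∧ ginv B (codeStr M) = ⇑e.symm := by
  obtain ⟨e₀, he⟩ := h
  refine ⟨⟨gfun B (codeStr M), ginv B (codeStr M), gfun_ginv he, ginv_gfun he⟩, ?_, rfl, rfl⟩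
  intro i v
  -- choose a stage where all values of `v` appear on the `M`-side
  set mx := (Finset.univ : Finset (Fin (L i))).sup v with hmx
  set K := 2 * mx + 1 with hK
  have hvmem : ∀ kk : Fin (L i), v kk ∈ (gq B (codeStr M) K).1 := by
    intro kk
    have h1 : v kk ≤ mx := Finset.le_sup (Finset.mem_univ kk)
    have h2 : 2 * (v kk) + 1 ≤ K := by omega
    exact (gq_prefix_le B (codeStr M) h2).1.subset (gq_mem1 B (codeStr M) (v kk))
  have hAtom := (gq_bf he K).1.atom
  set w : Fin (L i) → ℕ := fun kk => List.idxOf (v kk) (gq B (codeStr M) K).1 with hw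
  have hwlt : ∀ kk, w kk < (gq B (codeStr M) K).1.length :=
    fun kk => List.idxOf_lt_length_iff.mpr (hvmem kk)
  have hwval : ∀ kk, lget (gq B (codeStr M) K).1 (w kk) = v kk := by
    intro kk
    rw [lget_eq (hwlt kk)]
    exact List.getElem_idxOf (hwlt kk)
  have h3 := hAtom.2.2 i w hwlt
  rw [codeStr_apply] at h3
  have h4 : (fun kk => lget (gq B (codeStr M) K).1 (w kk)) = v := funext hwval
  rw [h4] at h3
  rw [h3]
  refine congrArg (B.rel i) (funext fun kk => ?_)
  show lget (gq B (codeStr M) K).2 (w kk) = gfun B (codeStr M) (v kk)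
  rw [← hwval kk]
  exact (gfun_spec he K (hwlt kk)).symm

end Selector6
section InterpAlgebra

theorem bool_eq_of_iff {a b : Bool} (h : a = true ↔ b = true) : a = b := by
  cases a <;> cases b <;> simp_all

theorem IsIso.comp {L : ℕ → ℕ} {M N P : Str L} {g h : ℕ ≃ ℕ}
    (hg : IsIso M N g) (hh : IsIso N P h) : IsIso M P (g.trans h) := by
  intro i v
  rw [hg i, hh i]
  rfl

theorem IsIso.inv {L : ℕ → ℕ} {M N : Str L} {g : ℕ ≃ ℕ} (hg : IsIso M N g) :
    IsIso N M g.symm := by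
  intro i v
  have h1 := hg i fun k => g.symm (v k)
  have h2 : (fun k => g (g.symm (v k))) = v := funext fun k => g.apply_symm_apply (v k)
  rw [h2] at h1
  exact h1.symm

variable {LA LB : ℕ → ℕ} {A : Str LA} {B : Str LB}

/-- A section of the surjection `f^B_A : Dom → A`. -/
noncomputable def sec (I : Interp A B) (a : ℕ) : List ℕ := (I.F_surj a).choose

theorem sec_dom (I : Interp A B) (a : ℕ) : sec I a ∈ I.Dom := (I.F_surj a).choose_spec.1

theorem sec_F (I : Interp A B) (a : ℕ) : I.F (sec I a) = a := (I.F_surj a).choose_spec.2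

/-- The action on points of `A` induced by a permutation of points of `B`. -/
noncomputable def piF (I : Interp A B) (h : ℕ → ℕ) (a : ℕ) : ℕ :=
  I.F (List.map h (sec I a))

theorem piF_congr (I : Interp A B) {h h' : ℕ → ℕ} (hh : ∀ n, h n = h' n) (a : ℕ) :
    piF I h a = piF I h' a := by
  unfold piF
  rw [List.map_congr_left fun n _ => hh n]

theorem piF_id (I : Interp A B) {h : ℕ → ℕ} (hh : ∀ n, h n = n) (a : ℕ) :
    piF I h a = a := by
  rw [piF_congr I hh, piF]
  have h2 : List.map (fun n : ℕ => n) (sec I a) = sec I a := List.map_id _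
  rw [h2, sec_F]

theorem piF_sec_eq (I : Interp A B) {h : ℕ ≃ ℕ} (hh : IsIso B B h) {l : List ℕ}
    (hl : l ∈ I.Dom) : I.F (List.map ⇑h (sec I (I.F l))) = I.F (List.map ⇑h l) := by
  have hmem : h ∈ aut B := hh
  have hsd : sec I (I.F l) ∈ I.Dom := sec_dom I _
  have h1 : I.eqv (sec I (I.F l)) l := (I.F_eqv _ hsd l hl).mp (sec_F I _)
  have h2 : I.eqv (List.map ⇑h (sec I (I.F l))) (List.map ⇑h l) :=
    I.eqv_inv h hmem _ hsd _ hl h1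
  exact (I.F_eqv _ (I.dom_inv h hmem _ hsd) _ (I.dom_inv h hmem _ hl)).mpr h2

theorem piF_hom (I : Interp A B) {h h' : ℕ ≃ ℕ} (hh : IsIso B B h) (hh' : IsIso B B h')
    (a : ℕ) : piF I ⇑h' (piF I ⇑h a) = I.F (List.map (⇑h' ∘ ⇑h) (sec I a)) := by
  unfold piF
  rw [piF_sec_eq I hh' (I.dom_inv h hh _ (sec_dom I a)), List.map_map]

theorem piF_inv (I : Interp A B) {h : ℕ ≃ ℕ} (hh : IsIso B B h) (a : ℕ) :
    piF I ⇑h.symm (piF I ⇑h a) = a := by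
  rw [piF_hom I hh hh.inv a]
  have h2 : (⇑h.symm ∘ ⇑h) = id := funext fun n => h.symm_apply_apply n
  rw [h2, List.map_id, sec_F]

/-- The induced permutation of `A`-points, as an equivalence. -/
noncomputable def piE (I : Interp A B) (h : ℕ ≃ ℕ) (hh : IsIso B B h) : ℕ ≃ ℕ where
  toFun := piF I ⇑h
  invFun := piF I ⇑h.symm
  left_inv := piF_inv I hh
  right_inv := fun a => by
    have := piF_inv I hh.inv a
    simpa using this

theorem piE_iso (I : Interp A B) (h : ℕ ≃ ℕ) (hh : IsIso B B h) :
    IsIso A A (piE I h hh) := by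
  intro i v
  apply bool_eq_of_iff
  have hsv : ∀ k, sec I (v k) ∈ I.Dom := fun k => sec_dom I _
  have hwv : ∀ k, List.map ⇑h (sec I (v k)) ∈ I.Dom :=
    fun k => I.dom_inv h hh _ (hsv k)
  have h1 : I.R i (fun k => sec I (v k)) ↔ A.rel i v = true := by
    have := I.F_rel i (fun k => sec I (v k)) hsv
    rw [show (fun k => I.F (sec I (v k))) = v from funext fun k => sec_F I (v k)] at this
    exact this
  have h2 : I.R i (fun k => List.map ⇑h (sec I (v k))) ↔
      A.rel i (fun k => piE I h hh (v k)) = true := I.F_rel i _ hwv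
  have h3 : I.R i (fun k => sec I (v k)) ↔ I.R i (fun k => List.map ⇑h (sec I (v k))) := by
    constructor
    · exact fun hr => I.R_inv i h hh _ hsv hr
    · intro hr
      have h4 := I.R_inv i h.symm hh.inv _ hwv hr
      have h5 : (fun k => List.map ⇑h.symm (List.map ⇑h (sec I (v k)))) =
          fun k => sec I (v k) := by
        funext k
        rw [List.map_map, show (⇑h.symm ∘ ⇑h) = id from funext fun n => h.symm_apply_apply n,
          List.map_id]
      rwa [h5] at h4
  rw [← h1, h3, h2]

end InterpAlgebra
section Functors

variable {LA LB : ℕ → ℕ} {A : Str LA} {B : Str LB}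

theorem pi_comp_B (bi : BiInterp A B) {h : ℕ ≃ ℕ} (hh : IsIso B B h) (b : ℕ) :
    piF bi.J (piF bi.I ⇑h) b = h b := by
  unfold piF
  have hLL : ∀ l ∈ List.map (sec bi.I) (sec bi.J b), l ∈ bi.I.Dom := by
    intro l hl
    obtain ⟨c, _, rfl⟩ := List.mem_map.mp hl
    exact sec_dom bi.I c
  have hFL : List.map bi.I.F (List.map (sec bi.I) (sec bi.J b)) = sec bi.J b := by
    rw [List.map_map]
    have h1 : ∀ c ∈ sec bi.J b, (bi.I.F ∘ sec bi.I) c = id c := fun c _ => sec_F bi.I c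
    rw [List.map_congr_left h1, List.map_id]
  have hdom : List.map bi.I.F (List.map (sec bi.I) (sec bi.J b)) ∈ bi.J.Dom := by
    rw [hFL]; exact sec_dom bi.J b
  have hc := bi.comp_def_B h hh (List.map (sec bi.I) (sec bi.J b)) hLL hdom
  rw [hFL, sec_F bi.J b] at hc
  have hchain : List.map bi.I.F (List.map (List.map ⇑h) (List.map (sec bi.I) (sec bi.J b))) =
      List.map (fun c => bi.I.F (List.map ⇑h (sec bi.I c))) (sec bi.J b) := by
    rw [List.map_map, List.map_map]
    rfl
  rw [hchain] at hc
  exact hc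

theorem pi_comp_A (bi : BiInterp A B) {u : ℕ ≃ ℕ} (hu : IsIso A A u) (a : ℕ) :
    piF bi.I (piF bi.J ⇑u) a = u a := by
  unfold piF
  have hLL : ∀ l ∈ List.map (sec bi.J) (sec bi.I a), l ∈ bi.J.Dom := by
    intro l hl
    obtain ⟨c, _, rfl⟩ := List.mem_map.mp hl
    exact sec_dom bi.J c
  have hFL : List.map bi.J.F (List.map (sec bi.J) (sec bi.I a)) = sec bi.I a := by
    rw [List.map_map]
    have h1 : ∀ c ∈ sec bi.I a, (bi.J.F ∘ sec bi.J) c = id c := fun c _ => sec_F bi.J c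
    rw [List.map_congr_left h1, List.map_id]
  have hdom : List.map bi.J.F (List.map (sec bi.J) (sec bi.I a)) ∈ bi.I.Dom := by
    rw [hFL]; exact sec_dom bi.I a
  have hc := bi.comp_def_A u hu (List.map (sec bi.J) (sec bi.I a)) hLL hdom
  rw [hFL, sec_F bi.I a] at hc
  have hchain : List.map bi.J.F (List.map (List.map ⇑u) (List.map (sec bi.J) (sec bi.I a))) =
      List.map (fun c => bi.J.F (List.map ⇑u (sec bi.J c))) (sec bi.I a) := by
    rw [List.map_map, List.map_map]
    rfl
  rw [hchain] at hc
  exact hc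

/-- The selected isomorphism from a copy `M` to the base structure `B`. -/
noncomputable def eB {L : ℕ → ℕ} (B : Str L) (M : Copy B) : ℕ ≃ ℕ :=
  (selector_ok M.2).choose

theorem eB_iso {L : ℕ → ℕ} (B : Str L) (M : Copy B) : IsIso M.1 B (eB B M) :=
  (selector_ok M.2).choose_spec.1

theorem eB_gfun {L : ℕ → ℕ} (B : Str L) (M : Copy B) :
    gfun B (codeStr M.1) = ⇑(eB B M) := (selector_ok M.2).choose_spec.2.1

theorem eB_ginv {L : ℕ → ℕ} (B : Str L) (M : Copy B) :
    ginv B (codeStr M.1) = ⇑(eB B M).symm := (selector_ok M.2).choose_spec.2.2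

/-- The base-point automorphism selected at `B` itself. -/
noncomputable def bas {L : ℕ → ℕ} (B : Str L) : ℕ ≃ ℕ := eB B (selfCopy B)

theorem bas_iso {L : ℕ → ℕ} (B : Str L) : IsIso B B (bas B) := eB_iso B (selfCopy B)

/-- The normalized selected isomorphism (`selfCopy B` gets the identity, pointwise). -/
noncomputable def gsel {L : ℕ → ℕ} (B : Str L) (M : Copy B) : ℕ ≃ ℕ :=
  (eB B M).trans (bas B).symm

theorem gsel_iso {L : ℕ → ℕ} (B : Str L) (M : Copy B) : IsIso M.1 B (gsel B M) :=
  (eB_iso B M).comp (bas_iso B).inv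

theorem gsel_self {L : ℕ → ℕ} (B : Str L) (n : ℕ) : gsel B (selfCopy B) n = n :=
  Equiv.symm_apply_apply (bas B) n

theorem gsel_coe {L : ℕ → ℕ} (B : Str L) (M : Copy B) (n : ℕ) :
    gsel B M n = ginv B (codeStr B) (gfun B (codeStr M.1) n) := by
  rw [eB_gfun B M, show codeStr B = codeStr (selfCopy B).1 from rfl, eB_ginv B (selfCopy B)]
  rfl

theorem gsel_symm_coe {L : ℕ → ℕ} (B : Str L) (M : Copy B) (n : ℕ) :
    (gsel B M).symm n = ginv B (codeStr M.1) (gfun B (codeStr B) n) := by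
  rw [eB_ginv B M, show codeStr B = codeStr (selfCopy B).1 from rfl, eB_gfun B (selfCopy B)]
  rfl

/-- The composite automorphism of `B` associated to an isomorphism of copies. -/
noncomputable def hsel {L : ℕ → ℕ} (B : Str L) (M N : Copy B) (g : ℕ ≃ ℕ) : ℕ ≃ ℕ :=
  (gsel B M).symm.trans (g.trans (gsel B N))

theorem hsel_iso {L : ℕ → ℕ} (B : Str L) (M N : Copy B) (g : ℕ ≃ ℕ)
    (hg : IsIso M.1 N.1 g) : IsIso B B (hsel B M N g) :=
  ((gsel_iso B M).inv.comp hg).comp (gsel_iso B N)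

/-- The functor `F_I : Iso(B) → Iso(A)` induced by the interpretation `I`. -/
noncomputable def FF (bi : BiInterp A B) : IsoFunctor B A where
  obj := fun _ => selfCopy A
  map := fun M N g hg => piE bi.I (hsel B M N g) (hsel_iso B M N g hg)
  map_iso := fun M N g hg => piE_iso bi.I _ _
  map_id := fun M _ => Equiv.ext fun a => by
    show piF bi.I _ a = a
    exact piF_id bi.I (fun n => by simp [hsel, Equiv.trans_apply]) a
  map_comp := fun M N P g₁ h₁ g₂ h₂ h₃ => Equiv.ext fun a => by
    show piF bi.I ⇑(hsel B M P (g₁.trans g₂)) a =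
      piF bi.I ⇑(hsel B N P g₂) (piF bi.I ⇑(hsel B M N g₁) a)
    rw [piF_hom bi.I (hsel_iso B M N g₁ h₁) (hsel_iso B N P g₂ h₂) a]
    unfold piF
    apply congrArg
    refine List.map_congr_left fun n _ => ?_
    simp [hsel, Equiv.trans_apply]

/-- The functor `F_J : Iso(A) → Iso(B)` induced by the interpretation `J`. -/
noncomputable def GG (bi : BiInterp A B) : IsoFunctor A B where
  obj := fun _ => selfCopy B
  map := fun M N g hg => piE bi.J (hsel A M N g) (hsel_iso A M N g hg)
  map_iso := fun M N g hg => piE_iso bi.J _ _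
  map_id := fun M _ => Equiv.ext fun a => by
    show piF bi.J _ a = a
    exact piF_id bi.J (fun n => by simp [hsel, Equiv.trans_apply]) a
  map_comp := fun M N P g₁ h₁ g₂ h₂ h₃ => Equiv.ext fun a => by
    show piF bi.J ⇑(hsel A M P (g₁.trans g₂)) a =
      piF bi.J ⇑(hsel A N P g₂) (piF bi.J ⇑(hsel A M N g₁) a)
    rw [piF_hom bi.J (hsel_iso A M N g₁ h₁) (hsel_iso A N P g₂ h₂) a]
    unfold piF
    apply congrArg
    refine List.map_congr_left fun n _ => ?_
    simp [hsel, Equiv.trans_apply]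

end Functors
section Adj

variable {LA LB : ℕ → ℕ} {A : Str LA} {B : Str LB}

theorem gsel_self_symm {L : ℕ → ℕ} (B : Str L) (n : ℕ) :
    (gsel B (selfCopy B)).symm n = n := by
  have h := Equiv.apply_symm_apply (gsel B (selfCopy B)) n
  rwa [gsel_self] at h

/-- The adjoint equivalence induced by a bi-interpretation. -/
noncomputable def EE (bi : BiInterp A B) : AdjEquiv B A where
  F := FF bi
  G := GG bi
  η := fun M => gsel B M
  ε := fun N => gsel A N
  η_iso := fun M => gsel_iso B M
  ε_iso := fun N => gsel_iso A N
  η_nat := by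
    intro M M' g hg
    apply Equiv.ext
    intro n
    show piF bi.J ⇑(hsel A (selfCopy A) (selfCopy A)
        (piE bi.I (hsel B M M' g) (hsel_iso B M M' g hg))) (gsel B M n) = gsel B M' (g n)
    have h1 : piF bi.J ⇑(hsel A (selfCopy A) (selfCopy A)
          (piE bi.I (hsel B M M' g) (hsel_iso B M M' g hg))) (gsel B M n) =
        piF bi.J (piF bi.I ⇑(hsel B M M' g)) (gsel B M n) := by
      apply piF_congr
      intro m
      show gsel A (selfCopy A) (piE bi.I (hsel B M M' g) (hsel_iso B M M' g hg)
        ((gsel A (selfCopy A)).symm m)) = piF bi.I ⇑(hsel B M M' g) m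
      rw [gsel_self_symm, gsel_self]
      rfl
    rw [h1, pi_comp_B bi (hsel_iso B M M' g hg)]
    show gsel B M' (g ((gsel B M).symm (gsel B M n))) = _
    rw [Equiv.symm_apply_apply]
  ε_nat := by
    intro N N' g hg
    apply Equiv.ext
    intro n
    show piF bi.I ⇑(hsel B (selfCopy B) (selfCopy B)
        (piE bi.J (hsel A N N' g) (hsel_iso A N N' g hg))) (gsel A N n) = gsel A N' (g n)
    have h1 : piF bi.I ⇑(hsel B (selfCopy B) (selfCopy B)
          (piE bi.J (hsel A N N' g) (hsel_iso A N N' g hg))) (gsel A N n) =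
        piF bi.I (piF bi.J ⇑(hsel A N N' g)) (gsel A N n) := by
      apply piF_congr
      intro m
      show gsel B (selfCopy B) (piE bi.J (hsel A N N' g) (hsel_iso A N N' g hg)
        ((gsel B (selfCopy B)).symm m)) = piF bi.J ⇑(hsel A N N' g) m
      rw [gsel_self_symm, gsel_self]
      rfl
    rw [h1, pi_comp_A bi (hsel_iso A N N' g hg)]
    show gsel A N' (g ((gsel A N).symm (gsel A N n))) = _
    rw [Equiv.symm_apply_apply]
  triangleF := by
    intro M
    apply Equiv.ext
    intro a
    show piF bi.I ⇑(hsel B M (selfCopy B) (gsel B M)) a = gsel A (selfCopy A) a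
    rw [gsel_self]
    apply piF_id
    intro n
    show gsel B (selfCopy B) (gsel B M ((gsel B M).symm n)) = n
    rw [Equiv.apply_symm_apply, gsel_self]
  triangleG := by
    intro N
    apply Equiv.ext
    intro a
    show piF bi.J ⇑(hsel A N (selfCopy A) (gsel A N)) a = gsel B (selfCopy B) a
    rw [gsel_self]
    apply piF_id
    intro n
    show gsel A (selfCopy A) (gsel A N ((gsel A N).symm n)) = n
    rw [Equiv.apply_symm_apply, gsel_self]

end Adj
section Induced

variable {LA LB : ℕ → ℕ} {A : Str LA} {B : Str LB}

theorem map_symm_cancel {L : ℕ → ℕ} {BB : Str L} (MM : Copy BB) (l : List ℕ) :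
    List.map ⇑(gsel BB MM) (List.map ⇑(gsel BB MM).symm l) = l := by
  rw [List.map_map]
  have h : (⇑(gsel BB MM) ∘ ⇑(gsel BB MM).symm) = id :=
    funext fun n => (gsel BB MM).apply_symm_apply n
  rw [h, List.map_id]

theorem inducedBy_FF (bi : BiInterp A B) :
    InducedBy bi.I (FF bi) (fun M a => List.map ⇑(gsel B M).symm (sec bi.I a)) := by
  intro M
  refine ⟨?_, ?_, ?_, ?_, ?_⟩
  · -- domain
    intro a g hg
    have hmem : IsIso B B ((gsel B M).symm.trans g) := (gsel_iso B M).inv.comp hg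
    have h1 : List.map ⇑((gsel B M).symm.trans g) (sec bi.I a) ∈ bi.I.Dom :=
      bi.I.dom_inv _ hmem _ (sec_dom bi.I a)
    rw [List.map_map]
    exact h1
  · -- onto classes
    intro l hl
    have hl0 : List.map ⇑(gsel B M) l ∈ bi.I.Dom := hl (gsel B M) (gsel_iso B M)
    refine ⟨bi.I.F (List.map ⇑(gsel B M) l), ?_⟩
    intro g hg
    have hmem : IsIso B B ((gsel B M).symm.trans g) := (gsel_iso B M).inv.comp hg
    have h1 : bi.I.eqv (sec bi.I (bi.I.F (List.map ⇑(gsel B M) l)))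
        (List.map ⇑(gsel B M) l) :=
      (bi.I.F_eqv _ (sec_dom bi.I _) _ hl0).mp (sec_F bi.I _)
    have h2 := bi.I.eqv_inv ((gsel B M).symm.trans g) hmem _ (sec_dom bi.I _) _ hl0 h1
    have h3 : List.map ⇑((gsel B M).symm.trans g) (List.map ⇑(gsel B M) l) =
        List.map ⇑g l := by
      rw [List.map_map]
      refine List.map_congr_left fun n _ => ?_
      show g ((gsel B M).symm (gsel B M n)) = g n
      rw [Equiv.symm_apply_apply]
    have h4 : List.map ⇑g (List.map ⇑(gsel B M).symm
        (sec bi.I (bi.I.F (List.map ⇑(gsel B M) l)))) =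
        List.map ⇑((gsel B M).symm.trans g) (sec bi.I (bi.I.F (List.map ⇑(gsel B M) l))) := by
      rw [List.map_map]; rfl
    rw [h4]
    rw [h3] at h2
    exact h2
  · -- injective on classes
    intro a b hab
    have h3 := hab (gsel B M) (gsel_iso B M)
    rw [map_symm_cancel M (sec bi.I a), map_symm_cancel M (sec bi.I b)] at h3
    have h4 := (bi.I.F_eqv _ (sec_dom bi.I a) _ (sec_dom bi.I b)).mpr h3
    rwa [sec_F, sec_F] at h4
  · -- relations
    intro k v
    have hsv : ∀ t, sec bi.I (v t) ∈ bi.I.Dom := fun t => sec_dom bi.I _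
    have hFs : (fun t => bi.I.F (sec bi.I (v t))) = v := funext fun t => sec_F bi.I (v t)
    constructor
    · intro hrel g hg
      have hmem : IsIso B B ((gsel B M).symm.trans g) := (gsel_iso B M).inv.comp hg
      have h1 : bi.I.R k fun t => sec bi.I (v t) := by
        rw [bi.I.F_rel k _ hsv, hFs]
        exact hrel
      have h2 := bi.I.R_inv k ((gsel B M).symm.trans g) hmem _ hsv h1
      have h3 : (fun t => List.map ⇑g (List.map ⇑(gsel B M).symm (sec bi.I (v t)))) =
          fun t => List.map ⇑((gsel B M).symm.trans g) (sec bi.I (v t)) := by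
        funext t; rw [List.map_map]; rfl
      rw [h3]
      exact h2
    · intro hR
      have h3 := hR (gsel B M) (gsel_iso B M)
      have h4 : (fun t => List.map ⇑(gsel B M) (List.map ⇑(gsel B M).symm (sec bi.I (v t)))) =
          fun t => sec bi.I (v t) := funext fun t => map_symm_cancel M _
      rw [h4] at h3
      have h5 := (bi.I.F_rel k _ hsv).mp h3
      rwa [hFs] at h5
  · -- naturality of the enumerations
    intro N g hg a g' hg'
    have hhiso : IsIso B B (hsel B M N g) := hsel_iso B M N g hg
    have hmem' : IsIso B B ((gsel B N).symm.trans g') := (gsel_iso B N).inv.comp hg'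
    have hl : List.map ⇑(hsel B M N g) (sec bi.I a) ∈ bi.I.Dom :=
      bi.I.dom_inv _ hhiso _ (sec_dom bi.I a)
    have h1 : bi.I.eqv (sec bi.I (bi.I.F (List.map ⇑(hsel B M N g) (sec bi.I a))))
        (List.map ⇑(hsel B M N g) (sec bi.I a)) :=
      (bi.I.F_eqv _ (sec_dom bi.I _) _ hl).mp (sec_F bi.I _)
    have h2 := bi.I.eqv_inv ((gsel B N).symm.trans g') hmem' _ (sec_dom bi.I _) _ hl h1
    -- rewrite the left list
    have h3 : List.map ⇑g' (List.map ⇑(gsel B N).symm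
        (sec bi.I ((FF bi).map M N g hg a))) =
        List.map ⇑((gsel B N).symm.trans g')
          (sec bi.I (bi.I.F (List.map ⇑(hsel B M N g) (sec bi.I a)))) := by
      rw [List.map_map]; rfl
    -- rewrite the right list
    have h4 : List.map ⇑((gsel B N).symm.trans g')
        (List.map ⇑(hsel B M N g) (sec bi.I a)) =
        List.map ⇑g' (List.map ⇑g (List.map ⇑(gsel B M).symm (sec bi.I a))) := by
      rw [List.map_map, List.map_map, List.map_map]
      refine List.map_congr_left fun n _ => ?_
      show g' ((gsel B N).symm (gsel B N (g ((gsel B M).symm n)))) = g' (g ((gsel B M).symm n))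
      rw [Equiv.symm_apply_apply]
    rw [h3]
    rw [h4] at h2
    exact h2

theorem inducedBy_GG (bi : BiInterp A B) :
    InducedBy bi.J (GG bi) (fun N b => List.map ⇑(gsel A N).symm (sec bi.J b)) := by
  intro M
  refine ⟨?_, ?_, ?_, ?_, ?_⟩
  · intro a g hg
    have hmem : IsIso A A ((gsel A M).symm.trans g) := (gsel_iso A M).inv.comp hg
    have h1 : List.map ⇑((gsel A M).symm.trans g) (sec bi.J a) ∈ bi.J.Dom :=
      bi.J.dom_inv _ hmem _ (sec_dom bi.J a)
    rw [List.map_map]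
    exact h1
  · intro l hl
    have hl0 : List.map ⇑(gsel A M) l ∈ bi.J.Dom := hl (gsel A M) (gsel_iso A M)
    refine ⟨bi.J.F (List.map ⇑(gsel A M) l), ?_⟩
    intro g hg
    have hmem : IsIso A A ((gsel A M).symm.trans g) := (gsel_iso A M).inv.comp hg
    have h1 : bi.J.eqv (sec bi.J (bi.J.F (List.map ⇑(gsel A M) l)))
        (List.map ⇑(gsel A M) l) :=
      (bi.J.F_eqv _ (sec_dom bi.J _) _ hl0).mp (sec_F bi.J _)
    have h2 := bi.J.eqv_inv ((gsel A M).symm.trans g) hmem _ (sec_dom bi.J _) _ hl0 h1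
    have h3 : List.map ⇑((gsel A M).symm.trans g) (List.map ⇑(gsel A M) l) =
        List.map ⇑g l := by
      rw [List.map_map]
      refine List.map_congr_left fun n _ => ?_
      show g ((gsel A M).symm (gsel A M n)) = g n
      rw [Equiv.symm_apply_apply]
    have h4 : List.map ⇑g (List.map ⇑(gsel A M).symm
        (sec bi.J (bi.J.F (List.map ⇑(gsel A M) l)))) =
        List.map ⇑((gsel A M).symm.trans g) (sec bi.J (bi.J.F (List.map ⇑(gsel A M) l))) := by
      rw [List.map_map]; rfl
    rw [h4]
    rw [h3] at h2
    exact h2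
  · intro a b hab
    have h3 := hab (gsel A M) (gsel_iso A M)
    rw [map_symm_cancel M (sec bi.J a), map_symm_cancel M (sec bi.J b)] at h3
    have h4 := (bi.J.F_eqv _ (sec_dom bi.J a) _ (sec_dom bi.J b)).mpr h3
    rwa [sec_F, sec_F] at h4
  · intro k v
    have hsv : ∀ t, sec bi.J (v t) ∈ bi.J.Dom := fun t => sec_dom bi.J _
    have hFs : (fun t => bi.J.F (sec bi.J (v t))) = v := funext fun t => sec_F bi.J (v t)
    constructor
    · intro hrel g hg
      have hmem : IsIso A A ((gsel A M).symm.trans g) := (gsel_iso A M).inv.comp hg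
      have h1 : bi.J.R k fun t => sec bi.J (v t) := by
        rw [bi.J.F_rel k _ hsv, hFs]
        exact hrel
      have h2 := bi.J.R_inv k ((gsel A M).symm.trans g) hmem _ hsv h1
      have h3 : (fun t => List.map ⇑g (List.map ⇑(gsel A M).symm (sec bi.J (v t)))) =
          fun t => List.map ⇑((gsel A M).symm.trans g) (sec bi.J (v t)) := by
        funext t; rw [List.map_map]; rfl
      rw [h3]
      exact h2
    · intro hR
      have h3 := hR (gsel A M) (gsel_iso A M)
      have h4 : (fun t => List.map ⇑(gsel A M) (List.map ⇑(gsel A M).symm (sec bi.J (v t)))) =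
          fun t => sec bi.J (v t) := funext fun t => map_symm_cancel M _
      rw [h4] at h3
      have h5 := (bi.J.F_rel k _ hsv).mp h3
      rwa [hFs] at h5
  · intro N g hg a g' hg'
    have hhiso : IsIso A A (hsel A M N g) := hsel_iso A M N g hg
    have hmem' : IsIso A A ((gsel A N).symm.trans g') := (gsel_iso A N).inv.comp hg'
    have hl : List.map ⇑(hsel A M N g) (sec bi.J a) ∈ bi.J.Dom :=
      bi.J.dom_inv _ hhiso _ (sec_dom bi.J a)
    have h1 : bi.J.eqv (sec bi.J (bi.J.F (List.map ⇑(hsel A M N g) (sec bi.J a))))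
        (List.map ⇑(hsel A M N g) (sec bi.J a)) :=
      (bi.J.F_eqv _ (sec_dom bi.J _) _ hl).mp (sec_F bi.J _)
    have h2 := bi.J.eqv_inv ((gsel A N).symm.trans g') hmem' _ (sec_dom bi.J _) _ hl h1
    have h3 : List.map ⇑g' (List.map ⇑(gsel A N).symm
        (sec bi.J ((GG bi).map M N g hg a))) =
        List.map ⇑((gsel A N).symm.trans g')
          (sec bi.J (bi.J.F (List.map ⇑(hsel A M N g) (sec bi.J a)))) := by
      rw [List.map_map]; rfl
    have h4 : List.map ⇑((gsel A N).symm.trans g')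
        (List.map ⇑(hsel A M N g) (sec bi.J a)) =
        List.map ⇑g' (List.map ⇑g (List.map ⇑(gsel A M).symm (sec bi.J a))) := by
      rw [List.map_map, List.map_map, List.map_map]
      refine List.map_congr_left fun n _ => ?_
      show g' ((gsel A N).symm (gsel A N (g ((gsel A M).symm n)))) = g' (g ((gsel A M).symm n))
      rw [Equiv.symm_apply_apply]
    rw [h3]
    rw [h4] at h2
    exact h2

end Induced
section Borel

theorem measurable_eval_comp {X : Type*} [MeasurableSpace X] {g : X → ℕ → ℕ}
    (hg : Measurable g) {k : X → ℕ} (hk : Measurable k) :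
    Measurable fun x => g x (k x) := by
  apply measurable_to_countable
  intro y
  have hset : (fun x => g x (k x)) ⁻¹' {g y (k y)} =
      ⋃ (m : ℕ), (k ⁻¹' {m} ∩ {x | g x m = g y (k y)}) := by
    ext x
    simp only [Set.mem_preimage, Set.mem_singleton_iff, Set.mem_iUnion, Set.mem_inter_iff,
      Set.mem_setOf_eq]
    constructor
    · intro h
      exact ⟨k x, rfl, h⟩
    · rintro ⟨m, h1, h2⟩
      rw [h1]; exact h2
  rw [hset]
  refine MeasurableSet.iUnion fun m => (hk (measurableSet_singleton m)).inter ?_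
  exact ((measurable_pi_apply m).comp hg) (measurableSet_singleton _)

theorem meas_map_eq {X : Type*} [MeasurableSpace X] {w : X → ℕ → ℕ}
    (hw : Measurable w) : ∀ (l u : List ℕ), MeasurableSet {x | List.map (w x) l = u} := by
  intro l
  induction l with
  | nil =>
    intro u
    have h0 : {x : X | List.map (w x) [] = u} = {_x : X | ([] : List ℕ) = u} := rfl
    rw [h0]
    exact MeasurableSet.const _
  | cons a l IH =>
    intro u
    cases u with
    | nil =>
      have : {x | List.map (w x) (a :: l) = []} = ∅ := by
        ext x; simp
      rw [this]; exact MeasurableSet.empty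
    | cons b u' =>
      have : {x | List.map (w x) (a :: l) = b :: u'} =
          {x | w x a = b} ∩ {x | List.map (w x) l = u'} := by
        ext x; simp
      rw [this]
      refine MeasurableSet.inter ?_ (IH u')
      exact ((measurable_pi_apply a).comp hw) (measurableSet_singleton b)

theorem measurable_list_comp {X : Type*} [MeasurableSpace X] {w : X → ℕ → ℕ}
    (hw : Measurable w) (l : List ℕ) (C : List ℕ → ℕ) :
    Measurable fun x => C (List.map (w x) l) := by
  apply measurable_to_countable
  intro y
  have hset : (fun x => C (List.map (w x) l)) ⁻¹' {C (List.map (w y) l)} =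
      ⋃ (u : List ℕ), ({x | List.map (w x) l = u} ∩
        {_x : X | C u = C (List.map (w y) l)}) := by
    ext x
    simp only [Set.mem_preimage, Set.mem_singleton_iff, Set.mem_iUnion, Set.mem_inter_iff,
      Set.mem_setOf_eq]
    constructor
    · intro h
      exact ⟨List.map (w x) l, rfl, h⟩
    · rintro ⟨u, h1, h2⟩
      rw [h1]; exact h2
  rw [hset]
  exact MeasurableSet.iUnion fun u => (meas_map_eq hw l u).inter (MeasurableSet.const _)

variable {LA LB : ℕ → ℕ} {A : Str LA} {B : Str LB}

/-- The Borel operator computing the action of `F_I` on morphisms. -/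
noncomputable def wFun {L : ℕ → ℕ} (B : Str L)
    (z : ObjCode L × (ℕ → ℕ) × ObjCode L) (n : ℕ) : ℕ :=
  ginv B (codeStr B) (gfun B z.2.2 (z.2.1 (ginv B z.1 (gfun B (codeStr B) n))))

theorem meas_wFun {L : ℕ → ℕ} (B : Str L) : Measurable (wFun B) := by
  refine measurable_pi_lambda _ fun n => ?_
  have m0 : Measurable fun z : ObjCode L × (ℕ → ℕ) × ObjCode L =>
      ginv B z.1 (gfun B (codeStr B) n) :=
    (measurable_pi_apply (gfun B (codeStr B) n)).comp ((meas_ginv B).comp measurable_fst)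
  have m1 : Measurable fun z : ObjCode L × (ℕ → ℕ) × ObjCode L =>
      z.2.1 (ginv B z.1 (gfun B (codeStr B) n)) :=
    measurable_eval_comp (measurable_fst.comp measurable_snd) m0
  have m2 : Measurable fun z : ObjCode L × (ℕ → ℕ) × ObjCode L =>
      gfun B z.2.2 (z.2.1 (ginv B z.1 (gfun B (codeStr B) n))) :=
    measurable_eval_comp ((meas_gfun B).comp (measurable_snd.comp measurable_snd)) m1
  exact (measurable_from_top (f := ginv B (codeStr B))).comp m2

theorem wFun_eq {L : ℕ → ℕ} (B : Str L) (M N : Copy B) (g : ℕ ≃ ℕ) (n : ℕ) :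
    wFun B (codeStr M.1, ⇑g, codeStr N.1) n = hsel B M N g n := by
  show ginv B (codeStr B) (gfun B (codeStr N.1) (g (ginv B (codeStr M.1)
    (gfun B (codeStr B) n)))) = _
  rw [← gsel_symm_coe B M n]
  rw [← gsel_coe B N (g ((gsel B M).symm n))]
  rfl

theorem borel_FF (bi : BiInterp A B) : IsBorelFunctor (FF bi) := by
  refine ⟨fun _ => codeStr A,
    fun z a => bi.I.F (List.map (wFun B z) (sec bi.I a)),
    measurable_const, ?_, fun M => rfl, ?_⟩
  · refine measurable_pi_lambda _ fun a => ?_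
    exact measurable_list_comp (meas_wFun B) (sec bi.I a) bi.I.F
  · intro M N g hg
    funext a
    show piF bi.I ⇑(hsel B M N g) a = _
    unfold piF
    apply congrArg
    refine (List.map_congr_left fun n _ => ?_).symm
    exact wFun_eq B M N g n

theorem borel_GG (bi : BiInterp A B) : IsBorelFunctor (GG bi) := by
  refine ⟨fun _ => codeStr B,
    fun z a => bi.J.F (List.map (wFun A z) (sec bi.J a)),
    measurable_const, ?_, fun M => rfl, ?_⟩
  · refine measurable_pi_lambda _ fun a => ?_
    exact measurable_list_comp (meas_wFun A) (sec bi.J a) bi.J.F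
  · intro M N g hg
    funext a
    show piF bi.J ⇑(hsel A M N g) a = _
    unfold piF
    apply congrArg
    refine (List.map_congr_left fun n _ => ?_).symm
    exact wFun_eq A M N g n

theorem borel_eta {L : ℕ → ℕ} (B : Str L) :
    ∃ u : ObjCode L → (ℕ → ℕ), Measurable u ∧
      ∀ M : Copy B, u (codeStr M.1) = ⇑(gsel B M) := by
  refine ⟨fun x n => ginv B (codeStr B) (gfun B x n), ?_, ?_⟩
  · refine measurable_pi_lambda _ fun n => ?_
    exact (measurable_from_top (f := ginv B (codeStr B))).comp ((measurable_pi_apply n).comp (meas_gfun B))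
  · intro M
    funext n
    exact (gsel_coe B M n).symm

end Borel

/-- **Theorem 1.12.** Let `B` and `A` be countable structures.  For every infinitary
bi-interpretation `(I, J)` of `A` and `B`, the induced functors `F_I : Iso(B) → Iso(A)`
and `F_J : Iso(A) → Iso(B)` form a Borel adjoint equivalence of the categories
`Iso(B)` and `Iso(A)`. -/
theorem biinterp_to_adj_equiv (LA LB : ℕ → ℕ) (A : Str LA) (B : Str LB)
    (bi : BiInterp A B) :
    ∃ (E : AdjEquiv B A) (τ : Copy B → ℕ → List ℕ) (ρ : Copy A → ℕ → List ℕ),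
      InducedBy bi.I E.F τ ∧ InducedBy bi.J E.G ρ ∧ IsBorelAdjEquiv E := by
  exact ⟨EE bi, fun M a => List.map ⇑(gsel B M).symm (sec bi.I a),
    fun N b => List.map ⇑(gsel A N).symm (sec bi.J b),
    inducedBy_FF bi, inducedBy_GG bi,
    borel_FF bi, borel_GG bi, borel_eta B, borel_eta A⟩

end Paper
end
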